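/- arXiv:2205.01808 — 7 statements merged into one kernel-verified Lean document; each statement's English description precedes it below -/
import Mathlib

section
/- Assume λ < 0 and μ > 0. Let v₁ ≠ v₂ in ℝ², let w₂ lie on the closed segment [v₁, v₂], and let w₁ ∈ C_A(v₁, v₂) with w₁ ≠ w₂. Let σ ∈ [0, π] be the angle between v₁ − v₂ and w₁ − w₂, i.e. w₁ − w₂ = (|w₁ − w₂|/|v₁ − v₂|) R_σ(v₁ − v₂), where R_σ denotes counterclockwise rotation by σ. Then φ_A(s, w₁, w₂) ∈ C_A(v₁, v₂) for every s ∈ [0, (π − σ)/μ]. -/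
noncomputable section

open Real Set RealInnerProductSpace

/-- The Euclidean plane. -/
abbrev E2 : Type := EuclideanSpace ℝ (Fin 2)

/-- The vector `(a, b)` in the Euclidean plane. -/
def vec2 (a b : ℝ) : E2 := WithLp.toLp 2 ![a, b]

/-- Counterclockwise rotation of angle `φ`. -/
def rotMap (φ : ℝ) (v : E2) : E2 :=
  vec2 (Real.cos φ * v 0 - Real.sin φ * v 1) (Real.sin φ * v 0 + Real.cos φ * v 1)

/-- `θ`, the counterclockwise rotation by `π/2`. -/
def thetaMap (v : E2) : E2 := vec2 (-(v 1)) (v 0)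

/-- The linear map with matrix `A = ((l, -m), (m, l))`. -/
def Amap (l m : ℝ) (v : E2) : E2 := vec2 (l * v 0 - m * v 1) (m * v 0 + l * v 1)

/-- The inverse `A⁻¹` of the matrix `A = ((l, -m), (m, l))` (with `det A = l² + m² ≠ 0`). -/
def AinvMap (l m : ℝ) (v : E2) : E2 :=
  (1 / (l ^ 2 + m ^ 2)) • vec2 (l * v 0 + m * v 1) (-m * v 0 + l * v 1)

/-- The matrix exponential `e^{τA} = e^{τl} R_{τm}` for `A = ((l, -m), (m, l))`. -/
def expA (l m τ : ℝ) (v : E2) : E2 := Real.exp (τ * l) • rotMap (τ * m) v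

/-- The equilibrium `v(u) = -u A⁻¹ η`. -/
def equil (l m : ℝ) (η : E2) (u : ℝ) : E2 := (-u) • AinvMap l m η

/-- The solution `φ(s, v, u) = e^{sA}(v - v(u)) + v(u)` of `ẋ = Ax + uη` for constant control. -/
def phi (l m : ℝ) (η : E2) (s : ℝ) (v : E2) (u : ℝ) : E2 :=
  expA l m s (v - equil l m η u) + equil l m η u

/-- The spiral `φ_A(τ, v₁, v₂) = e^{τA}(v₁ - v₂) + v₂`. -/
def phiA (l m : ℝ) (τ : ℝ) (v₁ v₂ : E2) : E2 := expA l m τ (v₁ - v₂) + v₂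

/-- The region `C_A(v₁, v₂)`. -/
def CA (l m : ℝ) (v₁ v₂ : E2) : Set E2 :=
  {v | 0 ≤ ⟪v - v₂, thetaMap (v₁ - v₂)⟫ ∧
    ∀ τ ∈ Icc (0 : ℝ) (π / m),
      0 ≤ ⟪v - phiA l m τ v₁ v₂, thetaMap (Amap l m (expA l m τ (v₁ - v₂)))⟫}

/-- Concatenated solution associated to a finite list of (time, control) pairs. -/
def trajComp (l m : ℝ) (η : E2) : E2 → List (ℝ × ℝ) → E2
  | v, [] => v
  | v, p :: rest => trajComp l m η (phi l m η p.1 v p.2) rest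

/-- The forward reachable set `R⁺(v)`. -/
def ReachPlus (l m : ℝ) (η : E2) (Ω : Set ℝ) (v : E2) : Set E2 :=
  {w | ∃ L : List (ℝ × ℝ), (∀ p ∈ L, 0 ≤ p.1 ∧ p.2 ∈ Ω) ∧ w = trajComp l m η v L}

/-- The backward reachable set `R⁻(v)` (forward reachable set of the time-reversed system). -/
def ReachMinus (l m : ℝ) (η : E2) (Ω : Set ℝ) (v : E2) : Set E2 :=
  {w | ∃ L : List (ℝ × ℝ), (∀ p ∈ L, p.1 ≤ 0 ∧ p.2 ∈ Ω) ∧ w = trajComp l m η v L}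

/-- An admissible trajectory of the system starting at `v`. -/
def IsAdmissibleTraj (l m : ℝ) (η : E2) (Ω : Set ℝ) (v : E2) (x : ℝ → E2) : Prop :=
  x 0 = v ∧
  ∃ t : ℕ → ℝ, t 0 = 0 ∧ StrictMono t ∧ (∀ M : ℝ, ∃ n, M < t n) ∧
    ∃ u : ℕ → ℝ, (∀ k, u k ∈ Ω) ∧
      ∀ k, ∀ s ∈ Icc (t k) (t (k + 1)), x s = phi l m η (s - t k) (x (t k)) (u k)

/-- An admissible trajectory of the time-reversed system starting at `v`. -/
def IsAdmissibleTrajRev (l m : ℝ) (η : E2) (Ω : Set ℝ) (v : E2) (x : ℝ → E2) : Prop :=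
  x 0 = v ∧
  ∃ t : ℕ → ℝ, t 0 = 0 ∧ StrictMono t ∧ (∀ M : ℝ, ∃ n, M < t n) ∧
    ∃ u : ℕ → ℝ, (∀ k, u k ∈ Ω) ∧
      ∀ k, ∀ s ∈ Icc (t k) (t (k + 1)), x s = phi l m η (-(s - t k)) (x (t k)) (u k)

/-- Conditions (a) and (b) of the definition of a control set. -/
def ControlSetAxioms (l m : ℝ) (η : E2) (Ω : Set ℝ) (D : Set E2) : Prop :=
  (∀ v ∈ D, ∃ x : ℝ → E2, IsAdmissibleTraj l m η Ω v x ∧ ∀ s : ℝ, 0 ≤ s → x s ∈ D) ∧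
  ∀ v ∈ D, D ⊆ closure (ReachPlus l m η Ω v)

/-- A control set: a set satisfying (a) and (b), maximal with respect to set inclusion. -/
def IsControlSet (l m : ℝ) (η : E2) (Ω : Set ℝ) (D : Set E2) : Prop :=
  ControlSetAxioms l m η Ω D ∧
    ∀ D' : Set E2, ControlSetAxioms l m η Ω D' → D ⊆ D' → D' = D

/-- Conditions (a) and (b) of the definition of a control set of the time-reversed system. -/
def ControlSetAxiomsRev (l m : ℝ) (η : E2) (Ω : Set ℝ) (D : Set E2) : Prop :=
  (∀ v ∈ D, ∃ x : ℝ → E2, IsAdmissibleTrajRev l m η Ω v x ∧ ∀ s : ℝ, 0 ≤ s → x s ∈ D) ∧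
  ∀ v ∈ D, D ⊆ closure (ReachMinus l m η Ω v)

/-- A control set of the time-reversed system. -/
def IsControlSetRev (l m : ℝ) (η : E2) (Ω : Set ℝ) (D : Set E2) : Prop :=
  ControlSetAxiomsRev l m η Ω D ∧
    ∀ D' : Set E2, ControlSetAxiomsRev l m η Ω D' → D ⊆ D' → D' = D

/-- `ρ = e^{πλ/μ}`. -/
def rho (l m : ℝ) : ℝ := Real.exp (π * l / m)

/-- The point `P⁺ = ((-u⁺ + ρ u⁻)/(1 - ρ)) A⁻¹ η`. -/
def Pplus (l m : ℝ) (η : E2) (um up : ℝ) : E2 :=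
  ((-up + rho l m * um) / (1 - rho l m)) • AinvMap l m η

/-- The point `P⁻ = ((-u⁻ + ρ u⁺)/(1 - ρ)) A⁻¹ η`. -/
def Pminus (l m : ℝ) (η : E2) (um up : ℝ) : E2 :=
  ((-um + rho l m * up) / (1 - rho l m)) • AinvMap l m η

/-- The region `C = C_A(P⁺, v(u⁻)) ∪ C_A(P⁻, v(u⁺))`. -/
def regionC (l m : ℝ) (η : E2) (um up : ℝ) : Set E2 :=
  CA l m (Pplus l m η um up) (equil l m η um) ∪ CA l m (Pminus l m η um up) (equil l m η up)

/-- The sequence `P₀ = v(u⁺)`, `P_{2n+1} = φ(π/μ, P_{2n}, u⁻)`, `P_{2n+2} = φ(π/μ, P_{2n+1}, u⁺)`. -/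
def Pseq (l m : ℝ) (η : E2) (um up : ℝ) : ℕ → E2
  | 0 => equil l m η up
  | n + 1 => phi l m η (π / m) (Pseq l m η um up n) (if n % 2 = 0 then um else up)

/-- The periodic orbit `O`. -/
def orbitO (l m : ℝ) (η : E2) (um up : ℝ) : Set E2 :=
  (fun s => phi l m η s (Pplus l m η um up) um) '' Icc (0 : ℝ) (π / m) ∪
    (fun s => phi l m η s (Pminus l m η um up) up) '' Icc (0 : ℝ) (π / m)


section Stmt0Aux

set_option maxHeartbeats 1000000

private lemma mono1' (l m φ : ℝ) {x y : ℝ} (hxy : x ≤ y)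
    (hsin : ∀ u ∈ Icc x y, 0 ≤ Real.sin (u * m + φ)) :
    Real.exp (x * l) * (l * Real.sin (x * m + φ) - m * Real.cos (x * m + φ)) ≤
      Real.exp (y * l) * (l * Real.sin (y * m + φ) - m * Real.cos (y * m + φ)) := by
  set f : ℝ → ℝ := fun u => Real.exp (u * l) * (l * Real.sin (u * m + φ) - m * Real.cos (u * m + φ)) with hfdef
  have hf : ∀ u, HasDerivAt f (Real.exp (u * l) * ((l ^ 2 + m ^ 2) * Real.sin (u * m + φ))) u := by
    intro u
    have h1 : HasDerivAt (fun u : ℝ => u * l) l u := by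
      simpa using (hasDerivAt_id u).mul_const l
    have h2 : HasDerivAt (fun u : ℝ => u * m + φ) m u := by
      simpa using ((hasDerivAt_id u).mul_const m).add_const φ
    have h3 : HasDerivAt (fun u : ℝ => Real.exp (u * l)) (Real.exp (u * l) * l) u := h1.exp
    have h4 : HasDerivAt (fun u : ℝ => Real.sin (u * m + φ)) (Real.cos (u * m + φ) * m) u := h2.sin
    have h5 : HasDerivAt (fun u : ℝ => Real.cos (u * m + φ)) (-Real.sin (u * m + φ) * m) u := h2.cos
    have h6 := h3.mul ((h4.const_mul l).sub (h5.const_mul m))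
    refine h6.congr_deriv ?_
    simp only [Pi.sub_apply]
    ring
  have hmono : MonotoneOn f (Icc x y) := by
    apply monotoneOn_of_deriv_nonneg (convex_Icc x y)
    · exact Continuous.continuousOn (by fun_prop)
    · exact fun u _ => (hf u).differentiableAt.differentiableWithinAt
    · intro u hu
      rw [(hf u).deriv]
      have := hsin u (Ioo_subset_Icc_self (by simpa [interior_Icc] using hu))
      positivity
  exact hmono (left_mem_Icc.mpr hxy) (right_mem_Icc.mpr hxy) hxy

private lemma key' (l m c t σ : ℝ) (hm : 0 < m) (hc : 0 ≤ c) (ht0 : 0 ≤ t)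
    (hσ0 : 0 ≤ σ)
    (H : ∀ τ ∈ Icc (0 : ℝ) (π / m),
      0 ≤ l * c * Real.sin (σ - τ * m) - m * c * Real.cos (σ - τ * m)
        - l * t * Real.sin (τ * m) - m * t * Real.cos (τ * m) + m * Real.exp (τ * l))
    {s τ : ℝ} (hs0 : 0 ≤ s) (hsu : s ≤ (π - σ) / m) (hτ0 : 0 ≤ τ) (hτu : τ ≤ π / m) :
    0 ≤ l * c * Real.exp (s * l) * Real.sin (s * m + σ - τ * m)
      - m * c * Real.exp (s * l) * Real.cos (s * m + σ - τ * m)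
      - l * t * Real.sin (τ * m) - m * t * Real.cos (τ * m) + m * Real.exp (τ * l) := by
  have hsm : s * m ≤ π - σ := (le_div_iff₀ hm).mp hsu
  have hτm : τ * m ≤ π := (le_div_iff₀ hm).mp hτu
  have claim1 : ∀ s' τ' : ℝ, 0 ≤ s' → s' ≤ τ' → τ' ≤ π / m →
      0 ≤ l * c * Real.exp (s' * l) * Real.sin (s' * m + σ - τ' * m)
        - m * c * Real.exp (s' * l) * Real.cos (s' * m + σ - τ' * m)
        - l * t * Real.sin (τ' * m) - m * t * Real.cos (τ' * m) + m * Real.exp (τ' * l) := by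
    intro s' τ' hs0' hst' hτu'
    have hτm' : τ' * m ≤ π := (le_div_iff₀ hm).mp hτu'
    have hH := H (τ' - s') ⟨by linarith, by
      calc τ' - s' ≤ τ' := by linarith
      _ ≤ π / m := hτu'⟩
    rw [show σ - (τ' - s') * m = s' * m + σ - τ' * m by ring,
        show (τ' - s') * m = τ' * m - s' * m by ring,
        show (τ' - s') * l = τ' * l - s' * l by ring] at hH
    have h1 : 0 ≤ Real.exp (s' * l) *
        (l * c * Real.sin (s' * m + σ - τ' * m) - m * c * Real.cos (s' * m + σ - τ' * m)
          - l * t * Real.sin (τ' * m - s' * m) - m * t * Real.cos (τ' * m - s' * m)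
          + m * Real.exp (τ' * l - s' * l)) := mul_nonneg (Real.exp_pos _).le hH
    have heq : Real.exp (s' * l) * Real.exp (τ' * l - s' * l) = Real.exp (τ' * l) := by
      rw [← Real.exp_add]; ring_nf
    have hmono := mono1' l (-m) (τ' * m) hs0' (fun u hu => by
      apply Real.sin_nonneg_of_nonneg_of_le_pi
      · nlinarith [hu.1, hu.2]
      · nlinarith [hu.1, hu.2])
    rw [show (0:ℝ) * (-m) + τ' * m = τ' * m by ring, show (0:ℝ) * l = 0 by ring,
        Real.exp_zero, show s' * (-m) + τ' * m = τ' * m - s' * m by ring] at hmono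
    have h2 := mul_le_mul_of_nonneg_left hmono ht0
    nlinarith [h1, h2, heq]
  rcases le_total s τ with hst | hts
  · exact claim1 s τ hs0 hst hτu
  · have base := claim1 τ τ hτ0 le_rfl hτu
    rw [show τ * m + σ - τ * m = σ by ring] at base
    have hmono := mono1' l m (σ - τ * m) hts (fun u hu => by
      apply Real.sin_nonneg_of_nonneg_of_le_pi
      · nlinarith [hu.1, hu.2, mul_le_mul_of_nonneg_right hts hm.le]
      · nlinarith [hu.1, hu.2, mul_le_mul_of_nonneg_right hu.2 hm.le])
    rw [show τ * m + (σ - τ * m) = σ by ring,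
        show s * m + (σ - τ * m) = s * m + σ - τ * m by ring] at hmono
    have h2 := mul_le_mul_of_nonneg_left hmono hc
    nlinarith [base, h2]

private lemma comp1' (v₁ v₂ : E2) (t c σ l m s : ℝ) :
    ⟪phiA l m s (v₂ + t • (v₁ - v₂) + c • rotMap σ (v₁ - v₂)) (v₂ + t • (v₁ - v₂)) - v₂,
      thetaMap (v₁ - v₂)⟫ = Real.exp (s*l) * c * Real.sin (s*m + σ) * ‖v₁ - v₂‖^2 := by
  rw [← real_inner_self_eq_norm_sq]
  simp [phiA, expA, rotMap, thetaMap, vec2, PiLp.inner_apply, Fin.sum_univ_two,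
    Real.sin_add, Real.cos_add, EuclideanSpace.real_norm_sq_eq]
  ring

private lemma comp2' (v₁ v₂ : E2) (t c σ l m s τ : ℝ) :
    ⟪phiA l m s (v₂ + t • (v₁ - v₂) + c • rotMap σ (v₁ - v₂)) (v₂ + t • (v₁ - v₂)) -
        phiA l m τ v₁ v₂, thetaMap (Amap l m (expA l m τ (v₁ - v₂)))⟫ =
      Real.exp (τ * l) * ‖v₁ - v₂‖ ^ 2 *
        (l * c * Real.exp (s * l) * Real.sin (s * m + σ - τ * m) -
          m * c * Real.exp (s * l) * Real.cos (s * m + σ - τ * m) -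
          l * t * Real.sin (τ * m) - m * t * Real.cos (τ * m) + m * Real.exp (τ * l)) := by
  rw [← real_inner_self_eq_norm_sq]
  rw [show s * m + σ - τ * m = s*m + (σ - τ*m) by ring]
  simp only [phiA, expA, rotMap, thetaMap, Amap, vec2, PiLp.inner_apply, Fin.sum_univ_two,
    PiLp.add_apply, PiLp.sub_apply, PiLp.smul_apply, smul_eq_mul, Matrix.cons_val_zero,
    Matrix.cons_val_one, Matrix.head_cons, RCLike.inner_apply, conj_trivial,
    Real.sin_add, Real.cos_add, Real.sin_sub, Real.cos_sub]
  linear_combination (Real.sin_sq_add_cos_sq (τ*m)) *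
    (m * Real.exp (τ*l)^2 * ((v₁ 0 - v₂ 0)^2 + (v₁ 1 - v₂ 1)^2))

private lemma phiA_zero' (l m : ℝ) (x y : E2) : phiA l m 0 x y = x := by
  ext i
  fin_cases i <;>
    simp [phiA, expA, rotMap, vec2, PiLp.add_apply, PiLp.sub_apply, PiLp.smul_apply] <;> ring

private lemma comp0' (v₁ v₂ : E2) (t c σ l m τ : ℝ) :
    ⟪(v₂ + t • (v₁ - v₂) + c • rotMap σ (v₁ - v₂)) - phiA l m τ v₁ v₂,
        thetaMap (Amap l m (expA l m τ (v₁ - v₂)))⟫ =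
      Real.exp (τ * l) * ‖v₁ - v₂‖ ^ 2 *
        (l * c * Real.sin (σ - τ * m) - m * c * Real.cos (σ - τ * m) -
          l * t * Real.sin (τ * m) - m * t * Real.cos (τ * m) + m * Real.exp (τ * l)) := by
  have := comp2' v₁ v₂ t c σ l m 0 τ
  rw [phiA_zero'] at this
  simpa using this

end Stmt0Aux

set_option maxHeartbeats 1000000 in
/-- invariance of the region `C_A(v₁, v₂)` (Proposition 1 of the paper). -/
theorem stmt0 (l m : ℝ) (hl : l < 0) (hm : 0 < m) (v₁ v₂ w₁ w₂ : E2) (hv : v₁ ≠ v₂)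
    (hw₂ : w₂ ∈ segment ℝ v₁ v₂) (hw₁ : w₁ ∈ CA l m v₁ v₂) (hw : w₁ ≠ w₂)
    (σ : ℝ) (hσ : σ ∈ Icc (0 : ℝ) π)
    (hangle : w₁ - w₂ = (‖w₁ - w₂‖ / ‖v₁ - v₂‖) • rotMap σ (v₁ - v₂)) :
    ∀ s ∈ Icc (0 : ℝ) ((π - σ) / m), phiA l m s w₁ w₂ ∈ CA l m v₁ v₂ := by
  have hd : v₁ - v₂ ≠ 0 := sub_ne_zero.mpr hv
  have hD : (0:ℝ) < ‖v₁ - v₂‖ ^ 2 := by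
    have := norm_pos_iff.mpr hd
    positivity
  -- write w₂ = v₂ + t • (v₁ - v₂)
  have hw₂' : w₂ ∈ segment ℝ v₂ v₁ := by rwa [segment_symm] at hw₂
  rw [segment_eq_image'] at hw₂'
  obtain ⟨t, ht, hw2eq⟩ := hw₂'
  have hw2eq' : v₂ + t • (v₁ - v₂) = w₂ := hw2eq
  subst hw2eq'
  -- write w₁ = v₂ + t • (v₁ - v₂) + c • rotMap σ (v₁ - v₂)
  obtain ⟨c, hc, hw1eq⟩ : ∃ c : ℝ, 0 ≤ c ∧
      v₂ + t • (v₁ - v₂) + c • rotMap σ (v₁ - v₂) = w₁ := by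
    refine ⟨‖w₁ - (v₂ + t • (v₁ - v₂))‖ / ‖v₁ - v₂‖,
      div_nonneg (norm_nonneg _) (norm_nonneg _), ?_⟩
    rw [sub_eq_iff_eq_add] at hangle
    conv_rhs => rw [hangle]
    exact add_comm _ _
  subst hw1eq
  -- scalar hypothesis from hw₁
  have H : ∀ τ ∈ Icc (0 : ℝ) (π / m),
      0 ≤ l * c * Real.sin (σ - τ * m) - m * c * Real.cos (σ - τ * m)
        - l * t * Real.sin (τ * m) - m * t * Real.cos (τ * m) + m * Real.exp (τ * l) := by
    intro τ hτ
    have h := hw₁.2 τ hτ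
    rw [comp0'] at h
    have hpos : (0:ℝ) < Real.exp (τ * l) * ‖v₁ - v₂‖ ^ 2 :=
      mul_pos (Real.exp_pos _) hD
    by_contra hcon
    push_neg at hcon
    nlinarith [mul_pos hpos (neg_pos.mpr hcon)]
  intro s hs
  have hsm : s * m ≤ π - σ := (le_div_iff₀ hm).mp hs.2
  refine ⟨?_, ?_⟩
  · rw [comp1']
    have hsin : 0 ≤ Real.sin (s * m + σ) := by
      apply Real.sin_nonneg_of_nonneg_of_le_pi
      · have := mul_nonneg hs.1 hm.le
        linarith [hσ.1]
      · linarith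
    have := Real.exp_pos (s * l)
    positivity
  · intro τ hτ
    rw [comp2']
    exact mul_nonneg (mul_pos (Real.exp_pos _) hD).le
      (key' l m c t σ hm hc ht.1 hσ.1 H hs.1 hs.2 hτ.1 hτ.2)
end
end

section
/- Let v₁ ≠ 0 in ℝ², let w₂ = t v₁ with 0 < t < 1, let w₁ ≠ w₂, and let σ ∈ [0, π] satisfy w₁ − w₂ = (|w₁ − w₂|/|v₁|) R_σ v₁, where R_σ is counterclockwise rotation by σ. Then for every s ∈ ℝ, ⟨φ_A(s, w₁, w₂), θ v₁⟩ = e^{sλ} |w₁ − w₂| |v₁| sin(μs + σ); in particular ⟨φ_A(s, w₁, w₂), θ v₁⟩ ≥ 0 for all s ∈ [0, (π − σ)/μ]. -/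
noncomputable section

open Real Set RealInnerProductSpace

/-- the inner product `⟪φ_A(s, w₁, w₂), θ v₁⟫` is
`e^{sλ} |w₁ - w₂| |v₁| sin(μ s + σ)`, nonnegative for `s ∈ [0, (π - σ)/μ]`. -/
theorem stmt1 (l m : ℝ) (hm : 0 < m) (v₁ w₁ w₂ : E2) (hv : v₁ ≠ 0)
    (t : ℝ) (ht0 : 0 < t) (ht1 : t < 1) (hw₂ : w₂ = t • v₁) (hw : w₁ ≠ w₂)
    (σ : ℝ) (hσ : σ ∈ Icc (0 : ℝ) π)
    (hangle : w₁ - w₂ = (‖w₁ - w₂‖ / ‖v₁‖) • rotMap σ v₁) :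
    (∀ s : ℝ, ⟪phiA l m s w₁ w₂, thetaMap v₁⟫ =
      Real.exp (s * l) * ‖w₁ - w₂‖ * ‖v₁‖ * Real.sin (m * s + σ)) ∧
    ∀ s ∈ Icc (0 : ℝ) ((π - σ) / m), 0 ≤ ⟪phiA l m s w₁ w₂, thetaMap v₁⟫ := by
  have hv1 : (0:ℝ) < ‖v₁‖ := norm_pos_iff.mpr hv
  have h0 : (w₁ - w₂) 0 = (‖w₁ - w₂‖ / ‖v₁‖) * (Real.cos σ * v₁ 0 - Real.sin σ * v₁ 1) := by
    conv_lhs => rw [hangle]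
    simp [rotMap, vec2]
  have h1 : (w₁ - w₂) 1 = (‖w₁ - w₂‖ / ‖v₁‖) * (Real.sin σ * v₁ 0 + Real.cos σ * v₁ 1) := by
    conv_lhs => rw [hangle]
    simp [rotMap, vec2]
  have hw2_0 : w₂ 0 = t * v₁ 0 := by rw [hw₂]; simp
  have hw2_1 : w₂ 1 = t * v₁ 1 := by rw [hw₂]; simp
  have hnorm : v₁ 0 ^ 2 + v₁ 1 ^ 2 = ‖v₁‖ ^ 2 := by
    rw [EuclideanSpace.norm_eq, Real.sq_sqrt (by positivity)]
    simp [Fin.sum_univ_two, sq_abs]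
  have key : ∀ s : ℝ, ⟪phiA l m s w₁ w₂, thetaMap v₁⟫ =
      Real.exp (s * l) * ‖w₁ - w₂‖ * ‖v₁‖ * Real.sin (m * s + σ) := by
    intro s
    have hx0 : phiA l m s w₁ w₂ 0 =
        Real.exp (s * l) * (Real.cos (s * m) * (w₁ - w₂) 0 - Real.sin (s * m) * (w₁ - w₂) 1)
          + w₂ 0 := by
      simp [phiA, expA, rotMap, vec2]
    have hx1 : phiA l m s w₁ w₂ 1 =
        Real.exp (s * l) * (Real.sin (s * m) * (w₁ - w₂) 0 + Real.cos (s * m) * (w₁ - w₂) 1)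
          + w₂ 1 := by
      simp [phiA, expA, rotMap, vec2]
    have hinner : ⟪phiA l m s w₁ w₂, thetaMap v₁⟫ =
        phiA l m s w₁ w₂ 0 * (-(v₁ 1)) + phiA l m s w₁ w₂ 1 * (v₁ 0) := by
      simp [PiLp.inner_apply, thetaMap, vec2, Fin.sum_univ_two]; ring
    rw [hinner, hx0, hx1, h0, h1, hw2_0, hw2_1,
      show m * s + σ = s * m + σ by ring, Real.sin_add]
    have hnorm2 : (v₁ 0 ^ 2 + v₁ 1 ^ 2) * ‖v₁‖⁻¹ = ‖v₁‖ := by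
      rw [hnorm, sq]; field_simp
    linear_combination (Real.exp (s*l) * (Real.sin (s*m) * Real.cos σ +
      Real.cos (s*m) * Real.sin σ) * ‖w₁ - w₂‖) * hnorm2
  refine ⟨key, fun s hs => ?_⟩
  rw [key s]
  have h1 : 0 ≤ m * s + σ := by
    have := hs.1; have := hσ.1; nlinarith
  have h2 : m * s + σ ≤ π := by
    have hms : s ≤ (π - σ) / m := hs.2
    have : m * s ≤ π - σ := by
      rw [le_div_iff₀ hm] at hms; linarith [hms]
    linarith
  have hsin := Real.sin_nonneg_of_nonneg_of_le_pi h1 h2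
  have : 0 ≤ Real.exp (s * l) * ‖w₁ - w₂‖ * ‖v₁‖ := by positivity
  exact mul_nonneg this hsin
end
end

section
/- Suppose λ = 0, so that tr A = 0 and det A = μ² > 0. Then the linear control system is controllable: for all v, w ∈ ℝ², one has w ∈ R⁺(v). -/
noncomputable section

open Real Set RealInnerProductSpace

section Aux

open Real

lemma exists_cos_sin (c s : ℝ) (h : c^2 + s^2 = 1) : ∃ θ : ℝ, Real.cos θ = c ∧ Real.sin θ = s := by
  have hz : (⟨c, s⟩ : ℂ) ≠ 0 := by
    intro h0; rw [Complex.ext_iff] at h0; simp at h0; nlinarith [h0.1, h0.2]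
  have habs : ‖(⟨c, s⟩ : ℂ)‖ = 1 := by
    rw [Complex.norm_def, Complex.normSq_mk]
    have : c * c + s * s = 1 := by nlinarith
    rw [this, Real.sqrt_one]
  refine ⟨Complex.arg ⟨c, s⟩, ?_, ?_⟩
  · rw [Complex.cos_arg hz, habs]; simp
  · rw [Complex.sin_arg, habs]; simp

lemma rot_to_aux (d0 d1 p0 p1 : ℝ) (hD : 0 < d0^2+d1^2) (hp : p0^2+p1^2 = d0^2+d1^2) :
    ∃ θ : ℝ, Real.cos θ * d0 - Real.sin θ * d1 = p0 ∧ Real.sin θ * d0 + Real.cos θ * d1 = p1 := by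
  have hD' : d0^2 + d1^2 ≠ 0 := hD.ne'
  have hcs : ((p0*d0+p1*d1)/(d0^2+d1^2))^2 + ((p1*d0-p0*d1)/(d0^2+d1^2))^2 = 1 := by
    field_simp
    nlinarith [hp]
  obtain ⟨θ, hc, hs⟩ := exists_cos_sin _ _ hcs
  refine ⟨θ, ?_, ?_⟩ <;> rw [hc, hs] <;> field_simp <;> nlinarith [hp]

lemma chord_aux (d0 d1 t0 t1 : ℝ) (hD : 0 < d0^2+d1^2) (hT : 0 < t0^2+t1^2)
    (hle : t0^2+t1^2 ≤ 4*(d0^2+d1^2)) :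
    ∃ θ θ' : ℝ,
      (Real.cos θ' * d0 - Real.sin θ' * d1) - (Real.cos θ * d0 - Real.sin θ * d1) = t0 ∧
      (Real.sin θ' * d0 + Real.cos θ' * d1) - (Real.sin θ * d0 + Real.cos θ * d1) = t1 := by
  set S : ℝ := t0^2 + t1^2 with hS
  set T : ℝ := Real.sqrt S with hT'
  have hTpos : 0 < T := Real.sqrt_pos.2 hT
  have hT2 : T ^ 2 = S := Real.sq_sqrt hT.le
  set r : ℝ := Real.sqrt (d0^2+d1^2 - S / 4) with hr
  have hr2 : r ^ 2 = d0^2+d1^2 - S / 4 := Real.sq_sqrt (by linarith)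
  have hpD : (-t0/2 - r*t1/T)^2 + (-t1/2 + r*t0/T)^2 = d0^2+d1^2 := by
    field_simp
    nlinarith [hT2, hr2]
  have hqD : (t0/2 - r*t1/T)^2 + (t1/2 + r*t0/T)^2 = d0^2+d1^2 := by
    field_simp
    nlinarith [hT2, hr2]
  obtain ⟨θ, hc0, hc1⟩ := rot_to_aux d0 d1 _ _ hD hpD
  obtain ⟨θ', hd0, hd1⟩ := rot_to_aux d0 d1 _ _ hD hqD
  refine ⟨θ, θ', ?_, ?_⟩
  · rw [hc0, hd0]; ring
  · rw [hc1, hd1]; ring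

lemma sq_sum_pos_of_ne_zero {x : E2} (hx : x ≠ 0) : 0 < x 0 ^ 2 + x 1 ^ 2 := by
  by_contra h0
  push_neg at h0
  apply hx
  have h1 : x 0 = 0 := by nlinarith [sq_nonneg (x 0), sq_nonneg (x 1)]
  have h2 : x 1 = 0 := by nlinarith [sq_nonneg (x 0), sq_nonneg (x 1)]
  ext i; fin_cases i <;> assumption

@[simp] lemma rotMap_apply0 (φ : ℝ) (v : E2) :
    rotMap φ v 0 = Real.cos φ * v 0 - Real.sin φ * v 1 := by simp [rotMap, vec2]

@[simp] lemma rotMap_apply1 (φ : ℝ) (v : E2) :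
    rotMap φ v 1 = Real.sin φ * v 0 + Real.cos φ * v 1 := by simp [rotMap, vec2]

lemma rot_rot (a b : ℝ) (x : E2) : rotMap a (rotMap b x) = rotMap (a + b) x := by
  ext i; fin_cases i <;> simp [Real.cos_add, Real.sin_add] <;> ring

lemma rot_zero (x : E2) : rotMap 0 x = x := by
  ext i; fin_cases i <;> simp

lemma rot_add (φ : ℝ) (x y : E2) : rotMap φ (x + y) = rotMap φ x + rotMap φ y := by
  ext i; fin_cases i <;> simp <;> ring

lemma rot_sub (φ : ℝ) (x y : E2) : rotMap φ (x - y) = rotMap φ x - rotMap φ y := by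
  ext i; fin_cases i <;> simp <;> ring

lemma rot_neg (φ : ℝ) (x : E2) : rotMap φ (-x) = - rotMap φ x := by
  ext i; fin_cases i <;> simp <;> ring

lemma rot_periodic (φ : ℝ) (k : ℤ) (x : E2) : rotMap (φ + k * (2 * π)) x = rotMap φ x := by
  ext i; fin_cases i <;>
    simp [Real.cos_add_int_mul_two_pi, Real.sin_add_int_mul_two_pi]

lemma trajComp_append (l m : ℝ) (η : E2) (v : E2) (L1 L2 : List (ℝ × ℝ)) :
    trajComp l m η v (L1 ++ L2) = trajComp l m η (trajComp l m η v L1) L2 := by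
  induction L1 generalizing v with
  | nil => rfl
  | cons p rest ih => simp [trajComp, ih]

lemma reach_refl (l m : ℝ) (η : E2) (Ω : Set ℝ) (v : E2) :
    v ∈ ReachPlus l m η Ω v := ⟨[], by simp, rfl⟩

lemma reach_trans {l m : ℝ} {η : E2} {Ω : Set ℝ} {v v' w : E2}
    (h1 : v' ∈ ReachPlus l m η Ω v) (h2 : w ∈ ReachPlus l m η Ω v') :
    w ∈ ReachPlus l m η Ω v := by
  obtain ⟨L1, hL1, he1⟩ := h1
  obtain ⟨L2, hL2, he2⟩ := h2
  refine ⟨L1 ++ L2, ?_, ?_⟩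
  · intro p hp
    rcases List.mem_append.1 hp with h | h
    · exact hL1 p h
    · exact hL2 p h
  · rw [trajComp_append, ← he1, he2]

lemma reach_rot {m : ℝ} (hm : 0 < m) (η : E2) {Ω : Set ℝ} {u : ℝ} (hu : u ∈ Ω)
    (v : E2) (φ : ℝ) :
    rotMap φ (v - equil 0 m η u) + equil 0 m η u ∈ ReachPlus 0 m η Ω v := by
  set k : ℤ := ⌈-φ / (2 * π)⌉ with hk
  have hπ : (0 : ℝ) < 2 * π := by positivity
  have hknn : -φ / (2 * π) ≤ (k : ℝ) := Int.le_ceil _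
  have hφk : 0 ≤ φ + k * (2 * π) := by
    have := (div_le_iff₀ hπ).1 hknn
    linarith
  set s : ℝ := (φ + k * (2 * π)) / m with hs
  have hs0 : 0 ≤ s := div_nonneg hφk hm.le
  refine ⟨[(s, u)], ?_, ?_⟩
  · intro p hp
    simp at hp
    rw [hp]
    exact ⟨hs0, hu⟩
  · show _ = trajComp 0 m η v [(s, u)]
    simp only [trajComp]
    rw [phi, expA]
    have hsm : s * m = φ + k * (2 * π) := by
      rw [hs]; field_simp
    rw [hsm, mul_zero, Real.exp_zero, one_smul, rot_periodic]

/-- Four rotations (about the two equilibria) implement the translation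
`x ↦ x + (rotMap θ' δ - rotMap θ δ)` where `δ = equil um - equil up`. -/
lemma reach_translate {m : ℝ} (hm : 0 < m) (η : E2) {um up : ℝ} (hu : um ≤ up)
    (x : E2) (θ θ' : ℝ) :
    x + (rotMap θ' (equil 0 m η um - equil 0 m η up)
        - rotMap θ (equil 0 m η um - equil 0 m η up))
      ∈ ReachPlus 0 m η (Icc um up) x := by
  set cm : E2 := equil 0 m η um with hcm
  set cp : E2 := equil 0 m η up with hcp
  have hum : um ∈ Icc um up := ⟨le_refl _, hu⟩
  have hup : up ∈ Icc um up := ⟨hu, le_refl _⟩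
  have h1 := reach_rot hm η hup x (-θ)
  have h2 := reach_rot hm η hum (rotMap (-θ) (x - cp) + cp) θ
  set y : E2 := rotMap θ (rotMap (-θ) (x - cp) + cp - cm) + cm with hy
  have h3 := reach_rot hm η hum y (-θ')
  have h4 := reach_rot hm η hup (rotMap (-θ') (y - cm) + cm) θ'
  have hmem := reach_trans (reach_trans (reach_trans h1 h2) h3) h4
  have hyval : y = x + ((cm - cp) - rotMap θ (cm - cp)) := by
    rw [hy]
    rw [show rotMap (-θ) (x - cp) + cp - cm = rotMap (-θ) (x - cp) + (cp - cm) by abel]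
    rw [rot_add, rot_rot, rot_sub]
    simp only [add_neg_cancel, neg_add_cancel, rot_zero]
    rw [← neg_sub cm cp, rot_neg]
    abel
  have hfinal : rotMap θ' (rotMap (-θ') (y - cm) + cm - cp) + cp
      = x + (rotMap θ' (cm - cp) - rotMap θ (cm - cp)) := by
    rw [show rotMap (-θ') (y - cm) + cm - cp = rotMap (-θ') (y - cm) + (cm - cp) by abel]
    rw [rot_add, rot_rot, rot_sub]
    simp only [add_neg_cancel, neg_add_cancel, rot_zero]
    rw [hyval]
    abel
  rw [hfinal] at hmem
  exact hmem

end Aux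

/-- if `tr A = 0` (i.e. `λ = 0`) and `det A = μ² > 0`, the system is controllable. -/
theorem stmt3 (l m : ℝ) (hl : l = 0) (hm : 0 < m) (η : E2) (hη : η ≠ 0)
    (um up : ℝ) (hu : um < up) :
    ∀ v w : E2, w ∈ ReachPlus l m η (Icc um up) v := by
  subst hl
  intro v w
  set δ : E2 := equil 0 m η um - equil 0 m η up with hδ
  have hδ0 : δ 0 = (up - um) * η 1 / m := by
    simp [hδ, equil, AinvMap, vec2]
    field_simp
    ring
  have hδ1 : δ 1 = (um - up) * η 0 / m := by
    simp [hδ, equil, AinvMap, vec2]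
    field_simp
    ring
  have hη2 : 0 < η 0 ^ 2 + η 1 ^ 2 := sq_sum_pos_of_ne_zero hη
  have hDpos : 0 < δ 0 ^ 2 + δ 1 ^ 2 := by
    rw [hδ0, hδ1]
    have h1 : ((up - um) * η 1 / m) ^ 2 + ((um - up) * η 0 / m) ^ 2
        = (up - um) ^ 2 * (η 0 ^ 2 + η 1 ^ 2) / m ^ 2 := by
      field_simp; ring
    rw [h1]
    have h2 : (0:ℝ) < (up - um) ^ 2 := by nlinarith
    positivity
  -- translation step by any nonzero t with small squared norm
  have hstep : ∀ t x : E2, t ≠ 0 → t 0 ^ 2 + t 1 ^ 2 ≤ 4 * (δ 0 ^ 2 + δ 1 ^ 2) →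
      x + t ∈ ReachPlus 0 m η (Icc um up) x := by
    intro t x ht hts
    obtain ⟨θ, θ', h0, h1⟩ := chord_aux (δ 0) (δ 1) (t 0) (t 1) hDpos
      (sq_sum_pos_of_ne_zero ht) hts
    have key : rotMap θ' δ - rotMap θ δ = t := by
      ext i; fin_cases i
      · show (rotMap θ' δ - rotMap θ δ) 0 = t 0
        simpa using h0
      · show (rotMap θ' δ - rotMap θ δ) 1 = t 1
        simpa using h1
    have := reach_translate hm η hu.le x θ θ'
    rw [← hδ, key] at this
    exact this
  -- iterate small steps from v to w
  by_cases hvw : w = v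
  · rw [hvw]; exact reach_refl _ _ _ _ _
  set t : E2 := w - v with htdef
  have ht : t ≠ 0 := fun h => hvw (by rwa [htdef, sub_eq_zero] at h)
  have hSpos : 0 < t 0 ^ 2 + t 1 ^ 2 := sq_sum_pos_of_ne_zero ht
  set D : ℝ := δ 0 ^ 2 + δ 1 ^ 2 with hD
  set S : ℝ := t 0 ^ 2 + t 1 ^ 2 with hS
  set n : ℕ := ⌈S / (4 * D)⌉₊ + 1 with hn
  have hn1 : 1 ≤ n := Nat.le_add_left 1 _
  have hnpos : (0:ℝ) < (n : ℝ) := by exact_mod_cast Nat.lt_of_lt_of_le Nat.zero_lt_one hn1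
  have hnn : S / (4 * D) ≤ (n : ℝ) := by
    calc S / (4 * D) ≤ (⌈S / (4 * D)⌉₊ : ℝ) := Nat.le_ceil _
    _ ≤ (n : ℝ) := by exact_mod_cast Nat.le_succ _
  have hSn : S ≤ 4 * D * (n : ℝ) ^ 2 := by
    have h1 : S ≤ 4 * D * (n : ℝ) := by
      have := (div_le_iff₀ (by positivity : (0:ℝ) < 4 * D)).1 hnn
      linarith
    have hn1' : (1:ℝ) ≤ (n:ℝ) := by exact_mod_cast hn1
    nlinarith [h1, hn1', hDpos, mul_nonneg (by linarith : (0:ℝ) ≤ (n:ℝ))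
      (by linarith : (0:ℝ) ≤ (n:ℝ) - 1)]
  set st : E2 := ((n : ℝ))⁻¹ • t with hst
  have hst0 : st 0 = t 0 / n := by rw [hst]; simp; ring
  have hst1 : st 1 = t 1 / n := by rw [hst]; simp; ring
  have hstne : st ≠ 0 := by
    intro h
    apply ht
    have h2 := congrArg (fun z : E2 => (n : ℝ) • z) h
    simpa [hst, smul_smul, mul_inv_cancel₀ (ne_of_gt hnpos)] using h2
  have hstS : st 0 ^ 2 + st 1 ^ 2 ≤ 4 * D := by
    rw [hst0, hst1, div_pow, div_pow, ← add_div, div_le_iff₀ (by positivity)]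
    calc t 0 ^ 2 + t 1 ^ 2 = S := hS.symm
    _ ≤ 4 * D * (n:ℝ)^2 := hSn
  have hiter : ∀ k : ℕ, v + (k : ℝ) • st ∈ ReachPlus 0 m η (Icc um up) v := by
    intro k
    induction k with
    | zero => simpa using reach_refl 0 m η (Icc um up) v
    | succ k ih =>
      have hs := hstep st (v + (k : ℝ) • st) hstne hstS
      have heq : v + ((k : ℝ) + 1) • st = v + (k : ℝ) • st + st := by
        rw [add_smul, one_smul]; abel
      rw [Nat.cast_succ, heq]
      exact reach_trans ih hs
  have hfin := hiter n
  have hw : v + (n : ℝ) • st = w := by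
    rw [hst, smul_smul, mul_inv_cancel₀ (ne_of_gt hnpos), one_smul, htdef]
    abel
  rwa [hw] at hfin
end
end

section
/- Assume λ < 0 and μ > 0, and set ρ := e^{πλ/μ}. Define recursively P₀ := v(u⁺), P_{2n+1} := φ(π/μ, P_{2n}, u⁻), and P_{2n+2} := φ(π/μ, P_{2n+1}, u⁺). Then for all n ≥ 1, P_{2n} = −ρ(Σ_{j=0}^{2n−1} ρ^j) v(u⁻) + (Σ_{j=0}^{2n} ρ^j) v(u⁺), and for all n ≥ 0, P_{2n+1} = (Σ_{j=0}^{2n+1} ρ^j) v(u⁻) − ρ(Σ_{j=0}^{2n} ρ^j) v(u⁺). -/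
noncomputable section

open Real Set RealInnerProductSpace

lemma rotMap_pi (v : E2) : rotMap π v = -v := by
  ext i
  fin_cases i <;>
    simp [rotMap, vec2, Matrix.cons_val_zero, Matrix.cons_val_one] <;> ring

lemma expA_pi (l m : ℝ) (hm : 0 < m) (v : E2) :
    expA l m (π / m) v = (-(rho l m)) • v := by
  have h1 : π / m * m = π := div_mul_cancel₀ _ hm.ne'
  have h2 : π / m * l = π * l / m := by ring
  rw [expA, h1, h2, rotMap_pi, rho, smul_neg, neg_smul]

lemma phi_pi (l m : ℝ) (hm : 0 < m) (η : E2) (v : E2) (u : ℝ) :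
    phi l m η (π / m) v u = (-(rho l m)) • v + (1 + rho l m) • equil l m η u := by
  rw [phi, expA_pi l m hm]
  module
/-- the explicit formulas for the points `P_{2n}` and `P_{2n+1}`. -/
theorem stmt4 (l m : ℝ) (hl : l < 0) (hm : 0 < m) (η : E2) (hη : η ≠ 0)
    (um up : ℝ) (hu : um < up) :
    (∀ n : ℕ, 1 ≤ n →
      Pseq l m η um up (2 * n) =
        (-(rho l m * ∑ j ∈ Finset.range (2 * n), rho l m ^ j)) • equil l m η um +
          (∑ j ∈ Finset.range (2 * n + 1), rho l m ^ j) • equil l m η up) ∧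
    ∀ n : ℕ,
      Pseq l m η um up (2 * n + 1) =
        (∑ j ∈ Finset.range (2 * n + 2), rho l m ^ j) • equil l m η um +
          (-(rho l m * ∑ j ∈ Finset.range (2 * n + 1), rho l m ^ j)) • equil l m η up := by
  have key : ∀ n : ℕ, Pseq l m η um up (2 * n + 1) =
      (∑ j ∈ Finset.range (2 * n + 2), rho l m ^ j) • equil l m η um +
        (-(rho l m * ∑ j ∈ Finset.range (2 * n + 1), rho l m ^ j)) • equil l m η up := by
    intro n
    induction n with
    | zero =>
      rw [show 2 * 0 + 1 = 0 + 1 from rfl, Pseq, Pseq]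
      rw [if_pos rfl, phi_pi l m hm]
      simp only [show 2 * 0 + 2 = 1 + 1 from rfl, geom_sum_succ,
        Finset.sum_range_one, Finset.sum_range_zero, pow_zero]
      module
    | succ n ih =>
      rw [show 2 * (n + 1) + 1 = (2 * n + 1 + 1) + 1 from by ring, Pseq, Pseq]
      rw [if_neg (by omega : ¬ (2 * n + 1) % 2 = 0), if_pos (by omega : (2 * n + 2) % 2 = 0),
        phi_pi l m hm, phi_pi l m hm, ih]
      simp only [show 2 * (n + 1) + 2 = 2 * n + 1 + 1 + 1 + 1 from by ring,
        show 2 * n + 2 = 2 * n + 1 + 1 from by ring, geom_sum_succ]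
      module
  refine ⟨?_, key⟩
  intro n hn
  obtain ⟨k, rfl⟩ : ∃ k, n = k + 1 := ⟨n - 1, by omega⟩
  rw [show 2 * (k + 1) = (2 * k + 1) + 1 from by ring, Pseq]
  rw [if_neg (by omega : ¬ (2 * k + 1) % 2 = 0), phi_pi l m hm, key k]
  simp only [show 2 * k + 2 = 2 * k + 1 + 1 from by ring, geom_sum_succ]
  module
end
end

section
/- Assume λ < 0 and μ > 0, and set ρ := e^{πλ/μ}. With the sequence P₀ := v(u⁺), P_{2n+1} := φ(π/μ, P_{2n}, u⁻), P_{2n+2} := φ(π/μ, P_{2n+1}, u⁺), one has P_{2n} → P⁺ := ((−u⁺ + ρu⁻)/(1 − ρ)) A⁻¹η and P_{2n+1} → P⁻ := ((−u⁻ + ρu⁺)/(1 − ρ)) A⁻¹η as n → ∞. -/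
noncomputable section

open Real Set RealInnerProductSpace

lemma phi_pi_div (l m : ℝ) (hm : m ≠ 0) (η : E2) (v : E2) (u : ℝ) :
    phi l m η (π / m) v u
      = (-(rho l m)) • v + (-(1 + rho l m) * u) • AinvMap l m η := by
  have h1 : π / m * m = π := div_mul_cancel₀ π hm
  have h2 : expA l m (π / m) (v - equil l m η u)
      = (rho l m) • (-(v - equil l m η u)) := by
    rw [expA, h1, rotMap_pi, rho]
    congr 2
    ring
  rw [phi, h2, equil]
  module

lemma stepA (l m : ℝ) (hm : m ≠ 0) (h1ρ : 1 - rho l m ≠ 0) (η : E2) (um up : ℝ) (v : E2) :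
    phi l m η (π / m) v um - Pminus l m η um up
      = (-(rho l m)) • (v - Pplus l m η um up) := by
  rw [phi_pi_div l m hm, Pminus, Pplus]
  match_scalars
  · ring
  · field_simp
    ring

lemma stepB (l m : ℝ) (hm : m ≠ 0) (h1ρ : 1 - rho l m ≠ 0) (η : E2) (um up : ℝ) (v : E2) :
    phi l m η (π / m) v up - Pplus l m η um up
      = (-(rho l m)) • (v - Pminus l m η um up) := by
  rw [phi_pi_div l m hm, Pplus, Pminus]
  match_scalars
  · ring
  · field_simp
    ring

lemma closedForm (l m : ℝ) (hm : m ≠ 0) (h1ρ : 1 - rho l m ≠ 0) (η : E2) (um up : ℝ) (n : ℕ) :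
    Pseq l m η um up (2 * n) - Pplus l m η um up
        = ((-(rho l m)) ^ (2 * n)) • (equil l m η up - Pplus l m η um up) ∧
    Pseq l m η um up (2 * n + 1) - Pminus l m η um up
        = ((-(rho l m)) ^ (2 * n + 1)) • (equil l m η up - Pplus l m η um up) := by
  induction n with
  | zero => simp [Pseq, stepA l m hm h1ρ η um up]
  | succ n ih =>
    have e1 : 2 * (n + 1) = (2 * n + 1) + 1 := by ring
    have hmod1 : (2 * n + 1) % 2 = 1 := by omega
    have hleft : Pseq l m η um up (2 * (n + 1)) - Pplus l m η um up
        = ((-(rho l m)) ^ (2 * (n + 1))) • (equil l m η up - Pplus l m η um up) := by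
      rw [e1, Pseq, hmod1]
      simp only [one_ne_zero, if_false]
      rw [stepB l m hm h1ρ η um up, ih.2, smul_smul]
      congr 1
      rw [pow_succ]
      ring
    refine ⟨hleft, ?_⟩
    rw [Pseq]
    have hmod3 : (2 * (n + 1)) % 2 = 0 := by omega
    rw [if_pos hmod3]
    rw [stepA l m hm h1ρ η um up, hleft, smul_smul]
    congr 1
    rw [pow_succ]
    ring

/-- `P_{2n} → P⁺` and `P_{2n+1} → P⁻` as `n → ∞`. -/
theorem stmt5 (l m : ℝ) (hl : l < 0) (hm : 0 < m) (η : E2) (hη : η ≠ 0)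
    (um up : ℝ) (hu : um < up) :
    Filter.Tendsto (fun n : ℕ => Pseq l m η um up (2 * n)) Filter.atTop
      (nhds (Pplus l m η um up)) ∧
    Filter.Tendsto (fun n : ℕ => Pseq l m η um up (2 * n + 1)) Filter.atTop
      (nhds (Pminus l m η um up)) := by
  have hm' : m ≠ 0 := ne_of_gt hm
  have hρ : rho l m < 1 := by
    rw [rho]
    rw [← Real.exp_zero]
    exact Real.exp_lt_exp.mpr
      (div_neg_of_neg_of_pos (mul_neg_of_pos_of_neg Real.pi_pos hl) hm)
  have hρ0 : 0 < rho l m := Real.exp_pos _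
  have h1ρ : 1 - rho l m ≠ 0 := by linarith
  have habs : |(-(rho l m))| < 1 := by rw [abs_neg, abs_of_pos hρ0]; exact hρ
  have hc : Filter.Tendsto (fun k : ℕ => (-(rho l m)) ^ k) Filter.atTop (nhds 0) :=
    tendsto_pow_atTop_nhds_zero_of_abs_lt_one habs
  have h2n : Filter.Tendsto (fun n : ℕ => 2 * n) Filter.atTop Filter.atTop :=
    Filter.tendsto_atTop_atTop_of_monotone (fun a b h => by omega) (fun b => ⟨b, by omega⟩)
  have h2n1 : Filter.Tendsto (fun n : ℕ => 2 * n + 1) Filter.atTop Filter.atTop :=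
    Filter.tendsto_atTop_atTop_of_monotone (fun a b h => by omega) (fun b => ⟨b, by omega⟩)
  set d := equil l m η up - Pplus l m η um up with hd
  constructor
  · have heq : ∀ n : ℕ, Pseq l m η um up (2 * n)
        = Pplus l m η um up + ((-(rho l m)) ^ (2 * n)) • d := by
      intro n
      have := (closedForm l m hm' h1ρ η um up n).1
      rw [← this]; abel
    simp only [heq]
    have : Filter.Tendsto (fun n : ℕ => ((-(rho l m)) ^ (2 * n)) • d)
        Filter.atTop (nhds ((0 : ℝ) • d)) :=
      Filter.Tendsto.smul_const (hc.comp h2n) d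
    rw [zero_smul] at this
    simpa using (tendsto_const_nhds.add this)
  · have heq : ∀ n : ℕ, Pseq l m η um up (2 * n + 1)
        = Pminus l m η um up + ((-(rho l m)) ^ (2 * n + 1)) • d := by
      intro n
      have := (closedForm l m hm' h1ρ η um up n).2
      rw [← this]; abel
    simp only [heq]
    have : Filter.Tendsto (fun n : ℕ => ((-(rho l m)) ^ (2 * n + 1)) • d)
        Filter.atTop (nhds ((0 : ℝ) • d)) :=
      Filter.Tendsto.smul_const (hc.comp h2n1) d
    rw [zero_smul] at this
    simpa using (tendsto_const_nhds.add this)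
end
end

section
/- Assume λ < 0 and μ > 0, and let C := C_A(P⁺, v(u⁻)) ∪ C_A(P⁻, v(u⁺)). Then for every v ∈ ℝ² \ C and every u ∈ Ω = [u⁻, u⁺]: (a) dist(φ(s, v, u), C) ≤ e^{sλ} dist(v, C) for all s ≥ 0, and (b) dist(φ(s, v, u), C) ≥ e^{sλ} dist(v, C) for all s ≤ 0, where dist(w, C) := inf_{c ∈ C} |w − c|. -/
noncomputable section

open Real Set RealInnerProductSpace

lemma gderiv (a : ℝ) (t : ℝ) :
    HasDerivAt (fun t => Real.exp (-(a*t)) * (Real.cos t + a * Real.sin t))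
      (-(1+a^2) * Real.exp (-(a*t)) * Real.sin t) t := by
  have h1 : HasDerivAt (fun t : ℝ => Real.exp (-(a*t))) (-a * Real.exp (-(a*t))) t := by
    have h0 : HasDerivAt (fun x : ℝ => -(a*x)) (-a) t := by
      have e : (fun x : ℝ => -(a*x)) = fun x => x * -a := by funext x; ring
      rw [e]; exact hasDerivAt_mul_const (-a)
    have := h0.exp
    simpa [mul_comm] using this
  have h2 : HasDerivAt (fun t : ℝ => Real.cos t + a * Real.sin t)
      (-Real.sin t + a * Real.cos t) t :=
    (Real.hasDerivAt_cos t).add ((Real.hasDerivAt_sin t).const_mul a)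
  have := h1.mul h2
  refine this.congr_deriv ?_
  ring

lemma auxmul (E E' v : ℝ) (h : E' * v ≤ 1) (hEE' : E * E' = 1) (hE : 0 < E) : v ≤ E := by
  nlinarith [mul_le_mul_of_nonneg_left h hE.le]

lemma K3 (a s t : ℝ) (hs : 0 ≤ s) (hst : s ≤ t) (ht : t ≤ π) :
    Real.exp (-(a*t)) * (Real.cos t + a * Real.sin t) ≤
      Real.exp (-(a*s)) * (Real.cos s + a * Real.sin s) := by
  have : AntitoneOn (fun t => Real.exp (-(a*t)) * (Real.cos t + a * Real.sin t)) (Icc 0 π) := by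
    apply antitoneOn_of_deriv_nonpos (convex_Icc 0 π)
    · exact Continuous.continuousOn (by continuity)
    · intro x hx
      exact (gderiv a x).differentiableAt.differentiableWithinAt
    · intro x hx
      rw [(gderiv a x).deriv]
      have hx' : x ∈ Ioo (0:ℝ) π := by simpa using hx
      have hsin : 0 ≤ Real.sin x := Real.sin_nonneg_of_nonneg_of_le_pi hx'.1.le hx'.2.le
      nlinarith [mul_nonneg (mul_nonneg (by positivity : (0:ℝ) ≤ 1 + a^2)
        (Real.exp_pos (-(a*x))).le) hsin]
  exact this ⟨hs, hst.trans ht⟩ ⟨hs.trans hst, ht⟩ hst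

lemma K1 (a t : ℝ) (ht0 : -π ≤ t) (ht : t ≤ π) :
    Real.cos t + a * Real.sin t ≤ Real.exp (a*t) := by
  have hEE' : Real.exp (a*t) * Real.exp (-(a*t)) = 1 := by
    rw [← Real.exp_add]; simp
  rcases le_total 0 t with h | h
  · have h1 := K3 a 0 t le_rfl h ht
    norm_num at h1
    exact auxmul _ _ _ h1 hEE' (Real.exp_pos _)
  · have h1 := K3 (-a) 0 (-t) le_rfl (by linarith) (by linarith)
    simp only [Real.cos_neg, Real.sin_neg] at h1
    norm_num at h1
    exact auxmul _ _ _ h1 hEE' (Real.exp_pos _)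

lemma K2 (a t : ℝ) (ht0 : 0 ≤ t) (ht : t ≤ π) :
    -(Real.cos t + a * Real.sin t) ≤ Real.exp (a*(t-π)) := by
  have h := K1 (-a) (π - t) (by linarith) (by linarith)
  rw [Real.cos_pi_sub, Real.sin_pi_sub] at h
  have harg : (-a)*(π-t) = a*(t-π) := by ring
  rw [harg] at h
  linarith

lemma K3' (a s t : ℝ) (hs : 0 ≤ s) (hst : s ≤ t) (ht : t ≤ π) :
    Real.cos t + a * Real.sin t ≤ Real.exp (a*(t-s)) * (Real.cos s + a * Real.sin s) := by
  have h := K3 a s t hs hst ht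
  have e1 : Real.exp (a*t) * Real.exp (-(a*t)) = 1 := by rw [← Real.exp_add]; simp
  have e2 : Real.exp (a*t) * Real.exp (-(a*s)) = Real.exp (a*(t-s)) := by
    rw [← Real.exp_add]; ring_nf
  calc Real.cos t + a * Real.sin t
      = (Real.exp (a*t) * Real.exp (-(a*t))) * (Real.cos t + a * Real.sin t) := by
        rw [e1]; ring
    _ = Real.exp (a*t) * (Real.exp (-(a*t)) * (Real.cos t + a * Real.sin t)) := by ring
    _ ≤ Real.exp (a*t) * (Real.exp (-(a*s)) * (Real.cos s + a * Real.sin s)) :=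
        mul_le_mul_of_nonneg_left h (Real.exp_pos (a*t)).le
    _ = (Real.exp (a*t) * Real.exp (-(a*s))) * (Real.cos s + a * Real.sin s) := by ring
    _ = Real.exp (a*(t-s)) * (Real.cos s + a * Real.sin s) := by rw [e2]

def myCnd (a K D X Y t : ℝ) : Prop :=
  -(Real.cos t + a*Real.sin t)*(X-K) + (a*Real.cos t - Real.sin t)*Y ≤ D * Real.exp (a*t)

def myH (a K D X Y : ℝ) : Prop :=
  ∀ t ∈ Icc (0:ℝ) π, myCnd a K D X Y t ∧ myCnd a K D (-X) (-Y) t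

def flX (a N t X Y : ℝ) : ℝ :=
  Real.exp (a*t)*(Real.cos t*(X+N) - Real.sin t*Y) - N
def flY (a N t X Y : ℝ) : ℝ :=
  Real.exp (a*t)*(Real.sin t*(X+N) + Real.cos t*Y)

lemma myH_neg {a K D X Y : ℝ} (h : myH a K D X Y) : myH a K D (-X) (-Y) := by
  intro t ht
  obtain ⟨h1, h2⟩ := h t ht
  exact ⟨h2, by simpa using h1⟩

lemma Dnonneg {a K D : ℝ} (ha : a < 0) (hK : 0 ≤ K) (hD : 2*K = D*(1 - Real.exp (a*π))) :
    0 ≤ D := by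
  have hρ : Real.exp (a*π) < 1 := by
    rw [show (1:ℝ) = Real.exp 0 by simp]
    exact Real.exp_lt_exp.2 (by nlinarith [Real.pi_pos])
  nlinarith

lemma Cp_to_H {a K D X Y : ℝ} (ha : a < 0) (hK : 0 ≤ K)
    (hD : 2*K = D*(1 - Real.exp (a*π))) (hY : Y ≤ 0)
    (hc : ∀ t ∈ Icc (0:ℝ) π, myCnd a K D X Y t) : myH a K D X Y := by
  have hD0 : 0 ≤ D := Dnonneg ha hK hD
  intro t ht
  refine ⟨hc t ht, ?_⟩
  have hs : 0 ≤ Real.sin t := Real.sin_nonneg_of_nonneg_of_le_pi ht.1 ht.2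
  have hsY : Real.sin t * Y ≤ 0 := mul_nonpos_of_nonneg_of_nonpos hs hY
  have hc0 := hc 0 ⟨le_rfl, Real.pi_pos.le⟩
  have hcπ := hc π ⟨Real.pi_pos.le, le_rfl⟩
  simp only [myCnd, Real.cos_zero, Real.sin_zero, Real.cos_pi, Real.sin_pi] at hc0 hcπ
  norm_num at hc0 hcπ
  -- hc0 : -(X-K) + a*Y ≤ D   (shape may vary)
  unfold myCnd
  rcases le_total 0 (Real.cos t + a * Real.sin t) with hca | hca
  · have hk1 := K1 a t (by linarith [Real.pi_pos, ht.1]) ht.2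
    nlinarith [mul_le_mul_of_nonneg_left hcπ hca,
      mul_le_mul_of_nonneg_left hk1 hD0,
      mul_nonneg (sq_nonneg a) (neg_nonneg.2 hsY), hsY]
  · have hk2 := K2 a t ht.1 ht.2
    have eρ : Real.exp (a*π) * Real.exp (a*(t-π)) = Real.exp (a*t) := by
      rw [← Real.exp_add]; ring_nf
    nlinarith [mul_le_mul_of_nonneg_left hc0 (neg_nonneg.2 hca),
      mul_le_mul_of_nonneg_left hk2 (mul_nonneg hD0 (Real.exp_pos (a*π)).le),
      mul_nonneg (sq_nonneg a) (neg_nonneg.2 hsY), hsY]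

lemma flow_cnd {a K D N X Y : ℝ} (ha : a < 0) (hK : 0 ≤ K)
    (hD : 2*K = D*(1 - Real.exp (a*π))) (hN : |N| ≤ K)
    (t₀ : ℝ) (ht₀ : t₀ ∈ Icc (0:ℝ) π) (hH : myH a K D X Y) :
    ∀ t ∈ Icc (0:ℝ) π, myCnd a K D (flX a N t₀ X Y) (flY a N t₀ X Y) t := by
  have hD0 : 0 ≤ D := Dnonneg ha hK hD
  obtain ⟨hN1, hN2⟩ := abs_le.1 hN
  intro t ht
  unfold myCnd
  have hid : -(Real.cos t + a*Real.sin t)*(flX a N t₀ X Y - K)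
      + (a*Real.cos t - Real.sin t)*(flY a N t₀ X Y)
      = Real.exp (a*t₀) * (-(Real.cos (t-t₀) + a*Real.sin (t-t₀))*(X-K)
          + (a*Real.cos (t-t₀) - Real.sin (t-t₀))*Y)
        + (N+K) * ((Real.cos t + a*Real.sin t)
          - Real.exp (a*t₀) * (Real.cos (t-t₀) + a*Real.sin (t-t₀))) := by
    simp only [flX, flY, Real.cos_sub, Real.sin_sub]
    ring
  rw [hid]
  have eE : Real.exp (a*t₀) * Real.exp (a*(t-t₀)) = Real.exp (a*t) := by
    rw [← Real.exp_add]; ring_nf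
  rcases le_total t₀ t with hct | hct
  · -- use condition at t - t₀
    have hF := (hH (t-t₀) ⟨by linarith, by linarith [ht.2, ht₀.1]⟩).1
    unfold myCnd at hF
    have hk := K3' a (t-t₀) t (by linarith) (by linarith [ht₀.1]) ht.2
    rw [show t-(t-t₀) = t₀ by ring] at hk
    nlinarith [mul_le_mul_of_nonneg_left hF (Real.exp_pos (a*t₀)).le,
      mul_le_mul_of_nonneg_right hk (by linarith : (0:ℝ) ≤ N+K)]
  · -- use the symmetric condition at t - t₀ + π
    have hu : t - t₀ + π ∈ Icc (0:ℝ) π := ⟨by linarith [ht.1, ht₀.2], by linarith [ht.1]⟩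
    have hF := (hH (t-t₀+π) hu).2
    unfold myCnd at hF
    rw [show t-t₀+π = (t-t₀)+π by ring] at hF
    simp only [Real.cos_add_pi, Real.sin_add_pi] at hF
    -- hF : -(-(cos(t-t₀)) + a*(-(sin(t-t₀))))*(-X-K) + (a*(-cos(t-t₀)) - (-sin(t-t₀)))*(-Y)
    --        ≤ D * exp (a*((t-t₀)+π))
    have eu : Real.exp (a*((t-t₀)+π)) = Real.exp (a*π) * Real.exp (a*(t-t₀)) := by
      rw [← Real.exp_add]; ring_nf
    rw [eu] at hF
    have hk1t := K1 a t (by linarith [Real.pi_pos, ht.1]) ht.2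
    have hk1' := K1 a (t-t₀) (by linarith [ht₀.2, ht.1]) (by linarith [ht.2, ht₀.1])
    have hF2 : -(Real.cos (t-t₀) + a*Real.sin (t-t₀))*(X+K)
        + (a*Real.cos (t-t₀) - Real.sin (t-t₀))*Y
        ≤ D * (Real.exp (a*π) * Real.exp (a*(t-t₀))) := by linarith [hF]
    have hA : Real.exp (a*t₀) * (-(Real.cos (t-t₀) + a*Real.sin (t-t₀))*(X+K)
        + (a*Real.cos (t-t₀) - Real.sin (t-t₀))*Y)
        ≤ Real.exp (a*π) * Real.exp (a*t) * D := by
      calc Real.exp (a*t₀) * (-(Real.cos (t-t₀) + a*Real.sin (t-t₀))*(X+K)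
            + (a*Real.cos (t-t₀) - Real.sin (t-t₀))*Y)
          ≤ Real.exp (a*t₀) * (D * (Real.exp (a*π) * Real.exp (a*(t-t₀)))) :=
            mul_le_mul_of_nonneg_left hF2 (Real.exp_pos (a*t₀)).le
        _ = Real.exp (a*π) * (Real.exp (a*t₀) * Real.exp (a*(t-t₀))) * D := by ring
        _ = Real.exp (a*π) * Real.exp (a*t) * D := by rw [eE]
    have hB : (K-N) * (Real.exp (a*t₀) * (Real.cos (t-t₀) + a*Real.sin (t-t₀)))
        ≤ (K-N) * Real.exp (a*t) := by
      have h1 : Real.exp (a*t₀) * (Real.cos (t-t₀) + a*Real.sin (t-t₀))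
          ≤ Real.exp (a*t₀) * Real.exp (a*(t-t₀)) :=
        mul_le_mul_of_nonneg_left hk1' (Real.exp_pos (a*t₀)).le
      rw [eE] at h1
      exact mul_le_mul_of_nonneg_left h1 (by linarith)
    have hC : (N+K) * (Real.cos t + a*Real.sin t) ≤ (N+K) * Real.exp (a*t) :=
      mul_le_mul_of_nonneg_left hk1t (by linarith)
    have hDe : Real.exp (a*π) * Real.exp (a*t) * D + (K-N)*Real.exp (a*t)
        + (N+K)*Real.exp (a*t) = D * Real.exp (a*t) := by
      linear_combination Real.exp (a*t) * hD
    nlinarith [hA, hB, hC, hDe]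

lemma flow_neg (a N t₀ X Y : ℝ) :
    flX a (-N) t₀ (-X) (-Y) = -(flX a N t₀ X Y) ∧
      flY a (-N) t₀ (-X) (-Y) = -(flY a N t₀ X Y) := by
  constructor <;> (simp only [flX, flY]; ring)

lemma flow_H {a K D N X Y : ℝ} (ha : a < 0) (hK : 0 ≤ K)
    (hD : 2*K = D*(1 - Real.exp (a*π))) (hN : |N| ≤ K)
    (t₀ : ℝ) (ht₀ : t₀ ∈ Icc (0:ℝ) π) (hH : myH a K D X Y) :
    myH a K D (flX a N t₀ X Y) (flY a N t₀ X Y) := by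
  intro t ht
  refine ⟨flow_cnd ha hK hD hN t₀ ht₀ hH t ht, ?_⟩
  have h2 := flow_cnd ha hK hD (by simpa using hN : |(-N)| ≤ K) t₀ ht₀ (myH_neg hH) t ht
  rwa [(flow_neg a N t₀ X Y).1, (flow_neg a N t₀ X Y).2] at h2

lemma flow_comp (a N t₁ t₀ X Y : ℝ) :
    flX a N t₁ (flX a N t₀ X Y) (flY a N t₀ X Y) = flX a N (t₀+t₁) X Y ∧
      flY a N t₁ (flX a N t₀ X Y) (flY a N t₀ X Y) = flY a N (t₀+t₁) X Y := by
  constructor <;>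
    (unfold flX flY;
     rw [show a*(t₀+t₁) = a*t₀ + a*t₁ by ring, Real.exp_add, Real.cos_add, Real.sin_add];
     ring)

lemma flow_H_all {a K D N X Y : ℝ} (ha : a < 0) (hK : 0 ≤ K)
    (hD : 2*K = D*(1 - Real.exp (a*π))) (hN : |N| ≤ K)
    (t₀ : ℝ) (ht₀ : 0 ≤ t₀) (hH : myH a K D X Y) :
    myH a K D (flX a N t₀ X Y) (flY a N t₀ X Y) := by
  obtain ⟨n, hn⟩ := exists_nat_gt (t₀ / π)
  have hπ := Real.pi_pos
  have hbound : t₀ ≤ (n:ℝ) * π := by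
    rcases n with _ | n
    · simp at hn; nlinarith [div_nonneg ht₀ hπ.le]
    · have := (div_lt_iff₀ hπ).1 hn
      push_cast at this ⊢
      nlinarith
  clear hn
  induction n generalizing X Y t₀ with
  | zero => simp at hbound; have : t₀ = 0 := le_antisymm hbound ht₀; subst this
            have h0 : ∀ X Y : ℝ, flX a N 0 X Y = X ∧ flY a N 0 X Y = Y := by
              intro X Y; constructor <;> (simp only [flX, flY]; simp)
            rw [(h0 X Y).1, (h0 X Y).2]; exact hH
  | succ n ih =>
    rcases le_total t₀ π with h | h
    · exact flow_H ha hK hD hN t₀ ⟨ht₀, h⟩ hH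
    · have hH' := flow_H ha hK hD hN π ⟨hπ.le, le_rfl⟩ hH
      have ih' := ih (t₀ - π) (by linarith) hH' (by push_cast at hbound ⊢; linarith)
      rw [(flow_comp a N (t₀-π) π X Y).1, (flow_comp a N (t₀-π) π X Y).2] at ih'
      rw [show π + (t₀ - π) = t₀ by ring] at ih'
      exact ih'

-- coordinates / inner
lemma inner2 (x y : E2) : ⟪x, y⟫ = x 0 * y 0 + x 1 * y 1 := by
  simp [PiLp.inner_apply, Fin.sum_univ_two, RCLike.inner_apply, mul_comm]

-- abbreviations
def bet2 (l m : ℝ) (η : E2) : ℝ := (AinvMap l m η 0)^2 + (AinvMap l m η 1)^2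
def Xc (l m : ℝ) (η : E2) (um up : ℝ) (v : E2) : ℝ :=
  v 0 * AinvMap l m η 0 + v 1 * AinvMap l m η 1 + ((um+up)/2) * bet2 l m η
def Yc (l m : ℝ) (η : E2) (v : E2) : ℝ :=
  v 1 * AinvMap l m η 0 - v 0 * AinvMap l m η 1
def KK (l m : ℝ) (η : E2) (um up : ℝ) : ℝ := ((up-um)/2) * bet2 l m η
def DD (l m : ℝ) (η : E2) (um up : ℝ) : ℝ := ((up-um)/(1 - rho l m)) * bet2 l m η

lemma bet2_pos (l m : ℝ) (hm : 0 < m) (η : E2) (hη : η ≠ 0) : 0 < bet2 l m η := by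
  have hlm : (0:ℝ) < l^2 + m^2 := by positivity
  have hb0 : bet2 l m η = (AinvMap l m η 0)^2 + (AinvMap l m η 1)^2 := rfl
  rcases lt_or_eq_of_le (by rw [hb0]; positivity : (0:ℝ) ≤ bet2 l m η) with h | h
  · exact h
  · exfalso
    rw [hb0] at h
    have h0 : AinvMap l m η 0 = 0 := by nlinarith [sq_nonneg (AinvMap l m η 0), sq_nonneg (AinvMap l m η 1)]
    have h1 : AinvMap l m η 1 = 0 := by nlinarith [sq_nonneg (AinvMap l m η 0), sq_nonneg (AinvMap l m η 1)]
    have e0 : AinvMap l m η 0 = (1/(l^2+m^2)) * (l * η 0 + m * η 1) := by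
      simp [AinvMap, vec2]
    have e1 : AinvMap l m η 1 = (1/(l^2+m^2)) * (-m * η 0 + l * η 1) := by
      simp [AinvMap, vec2]
    rw [e0] at h0; rw [e1] at h1
    have hA : l * η 0 + m * η 1 = 0 := by field_simp at h0; linarith
    have hB : -m * η 0 + l * η 1 = 0 := by field_simp at h1; linarith
    have hη0 : (l^2+m^2) * η 0 = 0 := by linear_combination l*hA - m*hB
    have hη1 : (l^2+m^2) * η 1 = 0 := by linear_combination m*hA + l*hB
    have hη0' : η 0 = 0 := by
      rcases mul_eq_zero.1 hη0 with h' | h'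
      · exact absurd h' (ne_of_gt hlm)
      · exact h'
    have hη1' : η 1 = 0 := by
      rcases mul_eq_zero.1 hη1 with h' | h'
      · exact absurd h' (ne_of_gt hlm)
      · exact h'
    apply hη
    ext i
    fin_cases i
    · exact hη0'
    · exact hη1'

lemma cond2_iff (l m : ℝ) (hm : 0 < m) (b : E2) (c₂ d : ℝ) (hd : d < 0) (v : E2) (τ : ℝ) :
    (0 ≤ ⟪v - phiA l m τ ((c₂+d)•b) (c₂•b),
        thetaMap (Amap l m (expA l m τ ((c₂+d)•b - c₂•b)))⟫)
    ↔ myCnd (l/m) 0 (-d*(b 0^2+b 1^2))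
        (v 0*b 0+v 1*b 1-c₂*(b 0^2+b 1^2)) (v 1*b 0-v 0*b 1) (τ*m) := by
  have hm' : m ≠ 0 := ne_of_gt hm
  have key : ⟪v - phiA l m τ ((c₂+d)•b) (c₂•b),
      thetaMap (Amap l m (expA l m τ ((c₂+d)•b - c₂•b)))⟫
      = Real.exp (τ*l) * (d * (-(m*Real.cos (τ*m)+l*Real.sin (τ*m))
            *(v 0*b 0+v 1*b 1-c₂*(b 0^2+b 1^2))
          + (l*Real.cos (τ*m)-m*Real.sin (τ*m))*(v 1*b 0-v 0*b 1))
        + d^2*m*(b 0^2+b 1^2)*Real.exp (τ*l)) := by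
    simp only [phiA, expA, rotMap, thetaMap, Amap, vec2, inner2, PiLp.add_apply,
      PiLp.sub_apply, PiLp.smul_apply, smul_eq_mul, Matrix.cons_val_zero,
      Matrix.cons_val_one, Matrix.head_cons]
    linear_combination (Real.exp (τ*l)^2*m*d^2*(b 0^2+b 1^2)) * Real.sin_sq_add_cos_sq (τ*m)
  rw [key]
  unfold myCnd
  rw [show (l/m)*(τ*m) = τ*l by field_simp]
  have hE := Real.exp_pos (τ*l)
  constructor
  · intro h
    have h1 : 0 ≤ d * (-(m*Real.cos (τ*m)+l*Real.sin (τ*m))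
            *(v 0*b 0+v 1*b 1-c₂*(b 0^2+b 1^2))
          + (l*Real.cos (τ*m)-m*Real.sin (τ*m))*(v 1*b 0-v 0*b 1))
        + d^2*m*(b 0^2+b 1^2)*Real.exp (τ*l) := by
      by_contra h'
      push_neg at h'
      nlinarith
    have h2 : (-(m*Real.cos (τ*m)+l*Real.sin (τ*m))
            *(v 0*b 0+v 1*b 1-c₂*(b 0^2+b 1^2))
          + (l*Real.cos (τ*m)-m*Real.sin (τ*m))*(v 1*b 0-v 0*b 1))
        + d*m*(b 0^2+b 1^2)*Real.exp (τ*l) ≤ 0 := by nlinarith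
    rw [← mul_le_mul_iff_right₀ hm]
    have e2 : m * (-(Real.cos (τ*m) + l/m*Real.sin (τ*m))
          *((v 0*b 0+v 1*b 1-c₂*(b 0^2+b 1^2)) - 0)
        + (l/m*Real.cos (τ*m) - Real.sin (τ*m))*(v 1*b 0-v 0*b 1))
        = (-(m*Real.cos (τ*m)+l*Real.sin (τ*m))
            *(v 0*b 0+v 1*b 1-c₂*(b 0^2+b 1^2))
          + (l*Real.cos (τ*m)-m*Real.sin (τ*m))*(v 1*b 0-v 0*b 1)) := by
      have hlm : l/m*m = l := div_mul_cancel₀ l hm'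
      rw [sub_zero]
      linear_combination (-(Real.sin (τ*m)*(v 0*b 0+v 1*b 1-c₂*(b 0^2+b 1^2)))
        + Real.cos (τ*m)*(v 1*b 0-v 0*b 1)) * hlm
    rw [e2]
    nlinarith [h2]
  · intro h
    rw [← mul_le_mul_iff_right₀ hm] at h
    have e2 : m * (-(Real.cos (τ*m) + l/m*Real.sin (τ*m))
          *((v 0*b 0+v 1*b 1-c₂*(b 0^2+b 1^2)) - 0)
        + (l/m*Real.cos (τ*m) - Real.sin (τ*m))*(v 1*b 0-v 0*b 1))
        = (-(m*Real.cos (τ*m)+l*Real.sin (τ*m))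
            *(v 0*b 0+v 1*b 1-c₂*(b 0^2+b 1^2))
          + (l*Real.cos (τ*m)-m*Real.sin (τ*m))*(v 1*b 0-v 0*b 1)) := by
      have hlm : l/m*m = l := div_mul_cancel₀ l hm'
      rw [sub_zero]
      linear_combination (-(Real.sin (τ*m)*(v 0*b 0+v 1*b 1-c₂*(b 0^2+b 1^2)))
        + Real.cos (τ*m)*(v 1*b 0-v 0*b 1)) * hlm
    rw [e2] at h
    nlinarith [h, mul_le_mul_of_nonpos_left h hd.le]

lemma CA_scalar_iff (l m : ℝ) (hm : 0 < m) (b : E2) (c₂ d : ℝ) (hd : d < 0) (v : E2) :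
    v ∈ CA l m ((c₂+d)•b) (c₂•b) ↔
      (v 1*b 0 - v 0*b 1 ≤ 0 ∧ ∀ t ∈ Icc (0:ℝ) π,
        myCnd (l/m) 0 (-d*(b 0^2+b 1^2)) (v 0*b 0+v 1*b 1-c₂*(b 0^2+b 1^2))
          (v 1*b 0-v 0*b 1) t) := by
  have hm' : m ≠ 0 := ne_of_gt hm
  simp only [CA, Set.mem_setOf_eq]
  apply and_congr
  · have e : ⟪v - c₂•b, thetaMap ((c₂+d)•b - c₂•b)⟫ = d * (v 1*b 0 - v 0*b 1) := by
      simp only [thetaMap, vec2, inner2, PiLp.sub_apply, PiLp.smul_apply, smul_eq_mul,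
        Matrix.cons_val_zero, Matrix.cons_val_one, Matrix.head_cons]
      ring
    rw [e]
    constructor
    · intro h; nlinarith
    · intro h; nlinarith
  · constructor
    · intro hCA t ht
      have hτ : t/m ∈ Icc (0:ℝ) (π/m) := ⟨div_nonneg ht.1 hm.le, by gcongr; exact ht.2⟩
      have h := (cond2_iff l m hm b c₂ d hd v (t/m)).1 (hCA (t/m) hτ)
      rwa [div_mul_cancel₀ t hm'] at h
    · intro hS τ hτ
      refine (cond2_iff l m hm b c₂ d hd v τ).2 ?_
      exact hS (τ*m) ⟨mul_nonneg hτ.1 hm.le, (le_div_iff₀ hm).1 hτ.2⟩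

lemma rho_lt_one (l m : ℝ) (hl : l < 0) (hm : 0 < m) : rho l m < 1 := by
  rw [rho, show (1:ℝ) = Real.exp 0 by simp]
  apply Real.exp_lt_exp.2
  exact div_neg_of_neg_of_pos (mul_neg_of_pos_of_neg Real.pi_pos hl) hm

lemma myCnd_congr {a K1 D1 X1 Y1 K2 D2 X2 Y2 t : ℝ} (hX : X1 - K1 = X2 - K2)
    (hD : D1 = D2) (hY : Y1 = Y2) : myCnd a K1 D1 X1 Y1 t ↔ myCnd a K2 D2 X2 Y2 t := by
  unfold myCnd; rw [hX, hD, hY]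

lemma memCplus_iff (l m : ℝ) (hl : l < 0) (hm : 0 < m) (η : E2) (um up : ℝ) (hu : um < up)
    (v : E2) :
    v ∈ CA l m (Pplus l m η um up) (equil l m η um) ↔
      (Yc l m η v ≤ 0 ∧ ∀ t ∈ Icc (0:ℝ) π,
        myCnd (l/m) (KK l m η um up) (DD l m η um up) (Xc l m η um up v) (Yc l m η v) t) := by
  have hm' : m ≠ 0 := ne_of_gt hm
  have hρ : rho l m < 1 := rho_lt_one l m hl hm
  have h1ρ : (0:ℝ) < 1 - rho l m := by linarith
  set d : ℝ := (um - up)/(1 - rho l m) with hdd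
  have hd : d < 0 := div_neg_of_neg_of_pos (by linarith) h1ρ
  have hP : Pplus l m η um up = ((-um) + d)•(AinvMap l m η) := by
    unfold Pplus
    congr 1
    rw [hdd]
    field_simp
    ring
  have hE : equil l m η um = (-um)•(AinvMap l m η) := rfl
  rw [hP, hE, CA_scalar_iff l m hm (AinvMap l m η) (-um) d hd v]
  apply and_congr Iff.rfl
  apply forall_congr'
  intro t
  apply imp_congr Iff.rfl
  apply myCnd_congr
  · simp only [Xc, KK, bet2]; ring
  · simp only [DD, bet2]; rw [hdd]; ring
  · rfl

lemma memCminus_iff (l m : ℝ) (hl : l < 0) (hm : 0 < m) (η : E2) (um up : ℝ) (hu : um < up)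
    (v : E2) :
    v ∈ CA l m (Pminus l m η um up) (equil l m η up) ↔
      (0 ≤ Yc l m η v ∧ ∀ t ∈ Icc (0:ℝ) π,
        myCnd (l/m) (KK l m η um up) (DD l m η um up) (-(Xc l m η um up v))
          (-(Yc l m η v)) t) := by
  have hm' : m ≠ 0 := ne_of_gt hm
  have hρ : rho l m < 1 := rho_lt_one l m hl hm
  have h1ρ : (0:ℝ) < 1 - rho l m := by linarith
  set d : ℝ := (um - up)/(1 - rho l m) with hdd
  have hd : d < 0 := div_neg_of_neg_of_pos (by linarith) h1ρ
  have hP : Pminus l m η um up = (up + d)•(-(AinvMap l m η)) := by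
    rw [smul_neg, ← neg_smul]
    unfold Pminus
    congr 1
    rw [hdd]
    field_simp
    ring
  have hEq : equil l m η up = (up)•(-(AinvMap l m η)) := by
    rw [smul_neg, ← neg_smul]; rfl
  rw [hP, hEq, CA_scalar_iff l m hm (-(AinvMap l m η)) up d hd v]
  apply and_congr
  · rw [show v 1 * (-(AinvMap l m η)) 0 - v 0 * (-(AinvMap l m η)) 1 = -(Yc l m η v) from by
      simp only [PiLp.neg_apply, Yc]; ring]
    exact neg_nonpos
  · apply forall_congr'
    intro t
    apply imp_congr Iff.rfl
    apply myCnd_congr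
    · simp only [PiLp.neg_apply, Xc, KK, bet2]; ring
    · simp only [PiLp.neg_apply, DD, bet2]; rw [hdd]; ring
    · simp only [PiLp.neg_apply, Yc]; ring

lemma flow_bridge (l m : ℝ) (hm : 0 < m) (η : E2) (um up u s : ℝ) (v : E2) :
    Xc l m η um up (phi l m η s v u)
      = flX (l/m) ((u-(um+up)/2)*bet2 l m η) (s*m) (Xc l m η um up v) (Yc l m η v)
    ∧ Yc l m η (phi l m η s v u)
      = flY (l/m) ((u-(um+up)/2)*bet2 l m η) (s*m) (Xc l m η um up v) (Yc l m η v) := by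
  have hm' : m ≠ 0 := ne_of_gt hm
  have hexp : l/m*(s*m) = s*l := by field_simp
  constructor <;>
    (simp only [flX, flY, hexp, Xc, Yc, KK, bet2, phi, expA, rotMap, equil, vec2,
      PiLp.add_apply, PiLp.sub_apply, PiLp.smul_apply, smul_eq_mul, Matrix.cons_val_zero,
      Matrix.cons_val_one, Matrix.head_cons];
     ring)

lemma phi_dist (l m : ℝ) (η : E2) (s u : ℝ) (v w : E2) :
    dist (phi l m η s v u) (phi l m η s w u) = Real.exp (s*l) * dist v w := by
  rw [EuclideanSpace.dist_eq, EuclideanSpace.dist_eq]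
  simp only [Fin.sum_univ_two, Real.dist_eq, sq_abs]
  have key : (phi l m η s v u 0 - phi l m η s w u 0)^2
      + (phi l m η s v u 1 - phi l m η s w u 1)^2
      = (Real.exp (s*l))^2 * ((v 0 - w 0)^2 + (v 1 - w 1)^2) := by
    simp only [phi, expA, rotMap, equil, vec2, PiLp.add_apply, PiLp.sub_apply,
      PiLp.smul_apply, smul_eq_mul, Matrix.cons_val_zero, Matrix.cons_val_one,
      Matrix.head_cons]
    linear_combination (Real.exp (s*l)^2 * ((v 0 - w 0)^2 + (v 1 - w 1)^2))
      * Real.sin_sq_add_cos_sq (s*m)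
  rw [key, Real.sqrt_mul (sq_nonneg _), Real.sqrt_sq (Real.exp_pos _).le]

lemma phi_group (l m : ℝ) (η : E2) (s u : ℝ) (v : E2) :
    phi l m η (-s) (phi l m η s v u) u = v := by
  have h := Real.sin_sq_add_cos_sq (s*m)
  ext i
  fin_cases i
  · simp only [phi, expA, rotMap, equil, vec2, PiLp.add_apply, PiLp.sub_apply,
      PiLp.smul_apply, smul_eq_mul, Matrix.cons_val_zero, Matrix.cons_val_one,
      Matrix.head_cons, Fin.zero_eta, Fin.mk_one, show (-s)*m = -(s*m) from by ring,
      show (-s)*l = -(s*l) from by ring, Real.cos_neg, Real.sin_neg, Real.exp_neg]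
    field_simp
    linear_combination (Real.exp (s*l) * (v 0 + u * AinvMap l m η 0)) * h
  · simp only [phi, expA, rotMap, equil, vec2, PiLp.add_apply, PiLp.sub_apply,
      PiLp.smul_apply, smul_eq_mul, Matrix.cons_val_zero, Matrix.cons_val_one,
      Matrix.head_cons, Fin.zero_eta, Fin.mk_one, show (-s)*m = -(s*m) from by ring,
      show (-s)*l = -(s*l) from by ring, Real.cos_neg, Real.sin_neg, Real.exp_neg]
    field_simp
    linear_combination (Real.exp (s*l) * (v 1 + u * AinvMap l m η 1)) * h

lemma region_nonempty (l m : ℝ) (hl : l < 0) (hm : 0 < m) (η : E2) (um up : ℝ)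
    (hu : um < up) : equil l m η um ∈ regionC l m η um up := by
  left
  rw [memCplus_iff l m hl hm η um up hu]
  have hY : Yc l m η (equil l m η um) = 0 := by
    simp only [Yc, equil, PiLp.smul_apply, smul_eq_mul]
    ring
  have hX : Xc l m η um up (equil l m η um) - KK l m η um up = 0 := by
    simp only [Xc, KK, bet2, equil, PiLp.smul_apply, smul_eq_mul]
    ring
  refine ⟨le_of_eq hY, fun t ht => ?_⟩
  unfold myCnd
  rw [hY, hX]
  have hρ : rho l m < 1 := rho_lt_one l m hl hm
  have hD0 : 0 ≤ DD l m η um up := by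
    have h1ρ : (0:ℝ) < 1 - rho l m := by linarith
    have hb : (0:ℝ) ≤ bet2 l m η := by unfold bet2; positivity
    unfold DD
    exact mul_nonneg (le_of_lt (div_pos (by linarith) h1ρ)) hb
  have := Real.exp_pos (l/m*t)
  nlinarith

lemma region_invariant (l m : ℝ) (hl : l < 0) (hm : 0 < m) (η : E2) (hη : η ≠ 0)
    (um up : ℝ) (hu : um < up) (u : ℝ) (huΩ : u ∈ Icc um up) (s : ℝ) (hs : 0 ≤ s)
    (c : E2) (hc : c ∈ regionC l m η um up) : phi l m η s c u ∈ regionC l m η um up := by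
  have hm' : m ≠ 0 := ne_of_gt hm
  have ha : l/m < 0 := div_neg_of_neg_of_pos hl hm
  have hβ : 0 < bet2 l m η := bet2_pos l m hm η hη
  have hρ : rho l m < 1 := rho_lt_one l m hl hm
  have h1ρ : (0:ℝ) < 1 - rho l m := by linarith
  have hKpos : 0 ≤ KK l m η um up := by
    unfold KK
    have : (0:ℝ) ≤ (up-um)/2 := by linarith
    positivity
  have hρeq : Real.exp ((l/m)*π) = rho l m := by
    rw [rho]
    congr 1
    field_simp
  have hDrel : 2*(KK l m η um up) = DD l m η um up * (1 - Real.exp ((l/m)*π)) := by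
    rw [hρeq]
    unfold KK DD
    field_simp
  have hH : myH (l/m) (KK l m η um up) (DD l m η um up) (Xc l m η um up c) (Yc l m η c) := by
    rcases hc with hc | hc
    · have h := (memCplus_iff l m hl hm η um up hu c).1 hc
      exact Cp_to_H ha hKpos hDrel h.1 h.2
    · have h := (memCminus_iff l m hl hm η um up hu c).1 hc
      have h2 := Cp_to_H ha hKpos hDrel (neg_nonpos.2 h.1) h.2
      have h3 := myH_neg h2
      simpa using h3
  have hN : |(u-(um+up)/2)*bet2 l m η| ≤ KK l m η um up := by
    unfold KK
    rw [abs_mul, abs_of_nonneg hβ.le]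
    apply mul_le_mul_of_nonneg_right _ hβ.le
    rw [abs_le]
    constructor <;> [linarith [huΩ.1]; linarith [huΩ.2]]
  have hflow := flow_H_all ha hKpos hDrel hN (s*m) (mul_nonneg hs hm.le) hH
  obtain ⟨hbX, hbY⟩ := flow_bridge l m hm η um up u s c
  rw [← hbX, ← hbY] at hflow
  rcases le_total (Yc l m η (phi l m η s c u)) 0 with hY | hY
  · left
    exact (memCplus_iff l m hl hm η um up hu _).2 ⟨hY, fun t ht => (hflow t ht).1⟩
  · right
    exact (memCminus_iff l m hl hm η um up hu _).2 ⟨hY, fun t ht => (hflow t ht).2⟩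

lemma infDist_decay (l m : ℝ) (hl : l < 0) (hm : 0 < m) (η : E2) (hη : η ≠ 0)
    (um up : ℝ) (hu : um < up) (u : ℝ) (huΩ : u ∈ Icc um up) (s : ℝ) (hs : 0 ≤ s) (v : E2) :
    Metric.infDist (phi l m η s v u) (regionC l m η um up) ≤
      Real.exp (s*l) * Metric.infDist v (regionC l m η um up) := by
  have hne : (regionC l m η um up).Nonempty := ⟨_, region_nonempty l m hl hm η um up hu⟩
  have hE := Real.exp_pos (s*l)
  apply le_of_forall_pos_le_add
  intro ε hε
  have hlt : Metric.infDist v (regionC l m η um up) <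
      Metric.infDist v (regionC l m η um up) + ε/Real.exp (s*l) :=
    lt_add_of_pos_right _ (div_pos hε hE)
  obtain ⟨c, hcC, hc⟩ := (Metric.infDist_lt_iff hne).1 hlt
  calc Metric.infDist (phi l m η s v u) (regionC l m η um up)
      ≤ dist (phi l m η s v u) (phi l m η s c u) :=
        Metric.infDist_le_dist_of_mem (region_invariant l m hl hm η hη um up hu u huΩ s hs c hcC)
    _ = Real.exp (s*l) * dist v c := phi_dist l m η s u v c
    _ ≤ Real.exp (s*l) * (Metric.infDist v (regionC l m η um up) + ε/Real.exp (s*l)) :=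
        mul_le_mul_of_nonneg_left hc.le hE.le
    _ = Real.exp (s*l) * Metric.infDist v (regionC l m η um up) + ε := by
        field_simp

/-- distance estimates to `C` along solutions with constant control. -/
theorem stmt12 (l m : ℝ) (hl : l < 0) (hm : 0 < m) (η : E2) (hη : η ≠ 0)
    (um up : ℝ) (hu : um < up) (v : E2) (hv : v ∉ regionC l m η um up)
    (u : ℝ) (huΩ : u ∈ Icc um up) :
    (∀ s : ℝ, 0 ≤ s →
      Metric.infDist (phi l m η s v u) (regionC l m η um up) ≤
        Real.exp (s * l) * Metric.infDist v (regionC l m η um up)) ∧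
    ∀ s : ℝ, s ≤ 0 →
      Real.exp (s * l) * Metric.infDist v (regionC l m η um up) ≤
        Metric.infDist (phi l m η s v u) (regionC l m η um up) := by
  constructor
  · intro s hs
    exact infDist_decay l m hl hm η hη um up hu u huΩ s hs v
  · intro s hs
    have h := infDist_decay l m hl hm η hη um up hu u huΩ (-s) (by linarith) (phi l m η s v u)
    rw [phi_group l m η s u v] at h
    have hE := Real.exp_pos (s*l)
    have hEE : Real.exp (s*l) * Real.exp ((-s)*l) = 1 := by
      rw [← Real.exp_add, show s*l + (-s)*l = 0 by ring, Real.exp_zero]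
    nlinarith [mul_le_mul_of_nonneg_left h hE.le, Metric.infDist_nonneg
      (s := regionC l m η um up) (x := phi l m η s v u)]
end
end

section
/- Assume λ < 0 and μ > 0, fix a nonzero η ∈ ℝ² and ν ∈ ℝ. For α < ν < β, let C_{α,β} := C_A(P⁺_{α,β}, v(α)) ∪ C_A(P⁻_{α,β}, v(β)), where P⁺_{α,β} := ((−β + ρα)/(1 − ρ)) A⁻¹η and P⁻_{α,β} := ((−α + ρβ)/(1 − ρ)) A⁻¹η with ρ := e^{πλ/μ}. Then each C_{α,β} is a nonempty compact subset of ℝ², and the map (α, β) ↦ C_{α,β}, from (−∞, ν) × (ν, +∞) to the space of nonempty compact subsets of ℝ², is continuous with respect to the Hausdorff distance. -/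
noncomputable section

open Real Set RealInnerProductSpace

namespace Stmt17
lemma inner2 (x y : E2) : ⟪x, y⟫ = x 0 * y 0 + x 1 * y 1 := by
  simp [PiLp.inner_apply, Fin.sum_univ_two]; ring

@[simp] lemma vec2_zero (a b : ℝ) : vec2 a b 0 = a := rfl
@[simp] lemma vec2_one (a b : ℝ) : vec2 a b 1 = b := rfl

lemma inner_neg_thetaA (l m : ℝ) (z : E2) :
    ⟪-z, thetaMap (Amap l m z)⟫ = m * (z 0 ^ 2 + z 1 ^ 2) := by
  simp [inner2, thetaMap, Amap, PiLp.neg_apply]; ring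

lemma vertex_mem_CA (l m : ℝ) (hm : 0 ≤ m) (v₁ v₂ : E2) : v₂ ∈ CA l m v₁ v₂ := by
  constructor
  · simp
  · intro τ hτ
    have h : v₂ - phiA l m τ v₁ v₂ = -(expA l m τ (v₁ - v₂)) := by
      simp [phiA]
    rw [h, inner_neg_thetaA]
    positivity
end Stmt17
namespace Stmt17
lemma thetaMap_smul (c : ℝ) (v : E2) : thetaMap (c • v) = c • thetaMap v := by
  ext i; fin_cases i <;> simp [thetaMap]

lemma Amap_smul (l m c : ℝ) (v : E2) : Amap l m (c • v) = c • Amap l m v := by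
  ext i; fin_cases i <;> simp [Amap] <;> ring

lemma rotMap_smul (φ c : ℝ) (v : E2) : rotMap φ (c • v) = c • rotMap φ v := by
  ext i; fin_cases i <;> simp [rotMap] <;> ring

lemma expA_smul (l m τ c : ℝ) (v : E2) : expA l m τ (c • v) = c • expA l m τ v := by
  rw [expA, expA, rotMap_smul, smul_comm]
end Stmt17
namespace Stmt17
lemma mem_CA_scale {l m c : ℝ} (hc : 0 < c) (e v₂ x : E2) :
    v₂ + c • x ∈ CA l m (v₂ + c • e) v₂ ↔ x ∈ CA l m e 0 := by
  have key : ∀ u v : E2, (0 ≤ ⟪c • u, c • v⟫) ↔ 0 ≤ ⟪u, v⟫ := fun u v => by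
    rw [real_inner_smul_left, real_inner_smul_right, ← mul_assoc]
    exact mul_nonneg_iff_of_pos_left (by positivity)
  have hw : v₂ + c • e - v₂ = c • e := by abel
  have hx : v₂ + c • x - v₂ = c • x := by abel
  have h2 : ∀ τ, v₂ + c • x - phiA l m τ (v₂ + c • e) v₂ = c • (x - expA l m τ e) := by
    intro τ; rw [phiA, hw, expA_smul, smul_sub]; abel
  have h3 : ∀ τ, x - phiA l m τ e 0 = x - expA l m τ e := by
    intro τ; rw [phiA, sub_zero, add_zero]
  unfold CA
  simp only [Set.mem_setOf_eq, hw, hx, h2, h3, sub_zero, thetaMap_smul, Amap_smul, expA_smul, key]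

lemma CA_scale {l m c : ℝ} (hc : 0 < c) (e v₂ : E2) :
    CA l m (v₂ + c • e) v₂ = (fun x => v₂ + c • x) '' CA l m e 0 := by
  ext v
  constructor
  · intro hv
    refine ⟨c⁻¹ • (v - v₂), ?_, ?_⟩
    · rw [← mem_CA_scale hc e v₂]
      rwa [smul_inv_smul₀ hc.ne', add_sub_cancel]
    · simp [smul_inv_smul₀ hc.ne']
  · rintro ⟨x, hx, rfl⟩
    exact (mem_CA_scale hc e v₂ x).mpr hx
end Stmt17
namespace Stmt17
set_option maxHeartbeats 1000000 in
lemma bound_arith {l m p s w0 w1 x0 x1 : ℝ} (hl : l < 0) (hm : 0 < m)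
    (hp0 : 0 < p) (hp1 : p < 1) (hs0 : 0 < s) (hs1 : s < 1)
    (hr2 : 0 < w0^2 + w1^2)
    (H1 : 0 ≤ x1*w0 - x0*w1)
    (hB : 0 ≤ (x0-w0)*(-(m*w0+l*w1)) + (x1-w1)*(l*w0-m*w1))
    (hT : 0 ≤ p * (-(x1*(l*w0-m*w1) - x0*(m*w0+l*w1)) + p*(m*(w0^2+w1^2))))
    (hS : 0 ≤ s * (-(x0*(l*w0-m*w1) + x1*(m*w0+l*w1)) + s*(m*(w0^2+w1^2)))) :
    x0^2 + x1^2 ≤ 2*(w0^2+w1^2) := by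
  obtain ⟨r2, hr2def⟩ : ∃ r2, r2 = w0^2+w1^2 := ⟨_, rfl⟩
  obtain ⟨a, hadef⟩ : ∃ a, a = x0*(l*w0-m*w1) + x1*(m*w0+l*w1) := ⟨_, rfl⟩
  obtain ⟨b, hbdef⟩ : ∃ b, b = x1*(l*w0-m*w1) - x0*(m*w0+l*w1) := ⟨_, rfl⟩
  have hr2' : 0 < r2 := by rw [hr2def]; exact hr2
  have hb_lo : -(m*r2) ≤ b := by
    have hid : (x0-w0)*(-(m*w0+l*w1)) + (x1-w1)*(l*w0-m*w1) = b + m*r2 := by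
      rw [hbdef, hr2def]; ring
    rw [hid] at hB; linarith
  have hb_hi : b ≤ p*(m*r2) := by
    have hX : 0 ≤ p * (-b + p*(m*r2)) := by rw [hbdef, hr2def]; exact hT
    have := (mul_nonneg_iff_of_pos_left hp0).mp hX
    linarith
  have ha_hi : a ≤ s*(m*r2) := by
    have hX : 0 ≤ s * (-a + s*(m*r2)) := by rw [hadef, hr2def]; exact hS
    have := (mul_nonneg_iff_of_pos_left hs0).mp hX
    linarith
  have hma : 0 ≤ m*a + l*b := by
    have hid : m*a + l*b = (l^2+m^2)*(x1*w0 - x0*w1) := by rw [hadef, hbdef]; ring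
    rw [hid]; exact mul_nonneg (by positivity) H1
  have ha_lo : l*r2 ≤ a := by
    have h1 : 0 ≤ (-l) * (b + m*r2) := mul_nonneg (by linarith) (by linarith)
    have h2 : 0 ≤ m * (a - l*r2) := by nlinarith
    nlinarith
  have hmr2 : 0 < m*r2 := by positivity
  have hb_hi' : b ≤ m*r2 := by nlinarith
  have ha_hi' : a ≤ m*r2 := by nlinarith
  have hml : 0 < m - l := by linarith
  have ha2 : a^2 ≤ (l^2+m^2)*r2^2 := by
    have hq : 0 ≤ (m*r2 - a) * (a - l*r2) :=
      mul_nonneg (by linarith) (by linarith)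
    have h1' : a^2 ≤ (l+m)*r2*a - l*m*r2^2 := by nlinarith [hq]
    have hpos : 0 ≤ m^2*(r2*(m*r2-a)) + l^2*(r2*(a-l*r2)) :=
      add_nonneg (mul_nonneg (sq_nonneg m) (mul_nonneg hr2'.le (by linarith)))
        (mul_nonneg (sq_nonneg l) (mul_nonneg hr2'.le (by linarith)))
    have hcert : m^2*(r2*(m*r2-a)) + l^2*(r2*(a-l*r2)) =
        (m-l) * ((l^2+m^2)*r2^2 - ((l+m)*r2*a - l*m*r2^2)) := by ring
    rw [hcert] at hpos
    have := (mul_nonneg_iff_of_pos_left hml).mp hpos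
    linarith
  have hb2 : b^2 ≤ (l^2+m^2)*r2^2 := by
    have hq : 0 ≤ (m*r2 - b) * (b + m*r2) :=
      mul_nonneg (by linarith) (by linarith)
    nlinarith [hq, sq_nonneg (l*r2)]
  have hlag : a^2 + b^2 = (x0^2 + x1^2) * ((l^2+m^2) * r2) := by
    rw [hadef, hbdef, hr2def]; ring
  have hd : 0 < (l^2+m^2) * r2 := by positivity
  have hfin : x0^2 + x1^2 ≤ 2*r2 := by
    rw [← mul_le_mul_iff_of_pos_right hd, ← hlag]
    have he : 2*r2*((l^2+m^2)*r2) = 2*((l^2+m^2)*r2^2) := by ring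
    rw [he]; linarith
  rw [hr2def] at hfin
  exact hfin
end Stmt17
namespace Stmt17
set_option maxHeartbeats 1000000 in
lemma CA_subset_ball {l m : ℝ} (hl : l < 0) (hm : 0 < m) {e : E2} (he : e ≠ 0) :
    CA l m e 0 ⊆ Metric.closedBall 0 (Real.sqrt 2 * ‖e‖) := by
  rintro x ⟨h1, h2⟩
  have hr2 : 0 < e 0 ^ 2 + e 1 ^ 2 := by
    by_contra h
    push_neg at h
    apply he
    have h0 : e 0 = 0 := by nlinarith [sq_nonneg (e 0), sq_nonneg (e 1)]
    have h1' : e 1 = 0 := by nlinarith [sq_nonneg (e 0), sq_nonneg (e 1)]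
    ext i; fin_cases i
    · simpa using h0
    · simpa using h1'
  have hpi : (0:ℝ) < π := Real.pi_pos
  have key : ∀ τ ∈ Icc (0:ℝ) (π/m),
      0 ≤ (x 0 - Real.exp (τ*l) * (Real.cos (τ*m) * e 0 - Real.sin (τ*m) * e 1)) *
            (-(m * (Real.exp (τ*l) * (Real.cos (τ*m) * e 0 - Real.sin (τ*m) * e 1)) +
               l * (Real.exp (τ*l) * (Real.sin (τ*m) * e 0 + Real.cos (τ*m) * e 1)))) +
          (x 1 - Real.exp (τ*l) * (Real.sin (τ*m) * e 0 + Real.cos (τ*m) * e 1)) *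
            (l * (Real.exp (τ*l) * (Real.cos (τ*m) * e 0 - Real.sin (τ*m) * e 1)) -
             m * (Real.exp (τ*l) * (Real.sin (τ*m) * e 0 + Real.cos (τ*m) * e 1))) := by
    intro τ hτ
    have h := h2 τ hτ
    simp only [phiA, expA, rotMap, Amap, thetaMap, sub_zero, add_zero] at h
    rw [inner2] at h
    simp only [PiLp.sub_apply, PiLp.smul_apply, smul_eq_mul, vec2_zero, vec2_one] at h
    linarith
  have hmem0 : (0:ℝ) ∈ Icc (0:ℝ) (π/m) := ⟨le_refl _, by positivity⟩
  have hmemH : π/(2*m) ∈ Icc (0:ℝ) (π/m) := by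
    constructor
    · positivity
    · rw [div_le_div_iff₀ (by positivity) (by positivity)]; nlinarith
  have hmemP : π/m ∈ Icc (0:ℝ) (π/m) := ⟨by positivity, le_refl _⟩
  have hp0 : 0 < Real.exp ((π/m)*l) := Real.exp_pos _
  have hs0 : 0 < Real.exp ((π/(2*m))*l) := Real.exp_pos _
  have hp1 : Real.exp ((π/m)*l) < 1 :=
    Real.exp_lt_one_iff.mpr (mul_neg_of_pos_of_neg (by positivity) hl)
  have hs1 : Real.exp ((π/(2*m))*l) < 1 :=
    Real.exp_lt_one_iff.mpr (mul_neg_of_pos_of_neg (by positivity) hl)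
  -- specialize τ = 0
  have hB0 := key 0 hmem0
  simp only [zero_mul, Real.exp_zero, Real.cos_zero, Real.sin_zero] at hB0
  have hB : 0 ≤ (x 0 - e 0)*(-(m*(e 0)+l*(e 1))) + (x 1 - e 1)*(l*(e 0)-m*(e 1)) := by
    nlinarith [hB0]
  -- specialize τ = π/m
  have hT0 := key (π/m) hmemP
  rw [show (π/m)*m = π by field_simp] at hT0
  simp only [Real.cos_pi, Real.sin_pi] at hT0
  have hT : 0 ≤ Real.exp ((π/m)*l) *
      (-(x 1*(l*(e 0)-m*(e 1)) - x 0*(m*(e 0)+l*(e 1))) +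
        Real.exp ((π/m)*l)*(m*((e 0)^2+(e 1)^2))) := by nlinarith [hT0]
  -- specialize τ = π/(2m)
  have hS0 := key (π/(2*m)) hmemH
  rw [show (π/(2*m))*m = π/2 by field_simp] at hS0
  simp only [Real.cos_pi_div_two, Real.sin_pi_div_two] at hS0
  have hS : 0 ≤ Real.exp ((π/(2*m))*l) *
      (-(x 0*(l*(e 0)-m*(e 1)) + x 1*(m*(e 0)+l*(e 1))) +
        Real.exp ((π/(2*m))*l)*(m*((e 0)^2+(e 1)^2))) := by nlinarith [hS0]
  -- first condition
  have H1 : 0 ≤ x 1 * e 0 - x 0 * e 1 := by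
    rw [sub_zero, sub_zero, inner2] at h1
    simp only [thetaMap, vec2_zero, vec2_one] at h1
    linarith
  have hmain := bound_arith hl hm hp0 hp1 hs0 hs1 hr2 H1 hB hT hS
  rw [Metric.mem_closedBall, dist_zero_right]
  have hnx : ‖x‖^2 = x 0^2 + x 1^2 := by
    rw [← real_inner_self_eq_norm_sq, inner2]; ring
  have hne : ‖e‖^2 = e 0^2 + e 1^2 := by
    rw [← real_inner_self_eq_norm_sq, inner2]; ring
  have h2' : ‖x‖^2 ≤ (Real.sqrt 2 * ‖e‖)^2 := by
    rw [mul_pow, Real.sq_sqrt (by norm_num : (0:ℝ) ≤ 2), hnx, hne]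
    linarith
  calc ‖x‖ = Real.sqrt (‖x‖^2) := (Real.sqrt_sq (norm_nonneg x)).symm
    _ ≤ Real.sqrt ((Real.sqrt 2 * ‖e‖)^2) := Real.sqrt_le_sqrt h2'
    _ = Real.sqrt 2 * ‖e‖ := Real.sqrt_sq (by positivity)
end Stmt17
namespace Stmt17
lemma isClosed_CA (l m : ℝ) (v₁ v₂ : E2) : IsClosed (CA l m v₁ v₂) := by
  have hset : CA l m v₁ v₂ = {v : E2 | 0 ≤ ⟪v - v₂, thetaMap (v₁ - v₂)⟫} ∩
      ⋂ τ ∈ Icc (0:ℝ) (π/m), {v : E2 | 0 ≤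
        ⟪v - phiA l m τ v₁ v₂, thetaMap (Amap l m (expA l m τ (v₁ - v₂)))⟫} := by
    ext v
    simp only [CA, Set.mem_setOf_eq, Set.mem_inter_iff, Set.mem_iInter]
  rw [hset]
  refine IsClosed.inter ?_ (isClosed_biInter fun τ _ => ?_) <;>
    exact isClosed_le continuous_const
      ((continuous_id.sub continuous_const).inner continuous_const)

lemma isCompact_CA0 {l m : ℝ} (hl : l < 0) (hm : 0 < m) {e : E2} (he : e ≠ 0) :
    IsCompact (CA l m e 0) := by
  rw [Metric.isCompact_iff_isClosed_bounded]
  exact ⟨isClosed_CA l m e 0,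
    Metric.isBounded_closedBall.subset (CA_subset_ball hl hm he)⟩

lemma AinvMap_ne_zero {l m : ℝ} (hm : 0 < m) {η : E2} (hη : η ≠ 0) :
    AinvMap l m η ≠ 0 := by
  intro h
  apply hη
  have hd : (0:ℝ) < l^2 + m^2 := by positivity
  have h0 : (AinvMap l m η) 0 = 0 := by rw [h]; rfl
  have h1 : (AinvMap l m η) 1 = 0 := by rw [h]; rfl
  simp only [AinvMap, PiLp.smul_apply, smul_eq_mul, vec2_zero, vec2_one] at h0 h1
  have e0 : l * η 0 + m * η 1 = 0 := by
    rcases mul_eq_zero.mp h0 with h | h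
    · exact absurd h (by positivity)
    · exact h
  have e1 : -m * η 0 + l * η 1 = 0 := by
    rcases mul_eq_zero.mp h1 with h | h
    · exact absurd h (by positivity)
    · exact h
  have hη0 : η 0 = 0 := by
    have : (l^2 + m^2) * η 0 = l * (l * η 0 + m * η 1) - m * (-m * η 0 + l * η 1) := by ring
    rw [e0, e1] at this
    simp at this
    exact this.resolve_left hd.ne'
  have hη1 : η 1 = 0 := by
    have : (l^2 + m^2) * η 1 = m * (l * η 0 + m * η 1) + l * (-m * η 0 + l * η 1) := by ring
    rw [e0, e1] at this
    simp at this
    exact this.resolve_left hd.ne'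
  ext i; fin_cases i
  · simpa using hη0
  · simpa using hη1

lemma rho_pos (l m : ℝ) : 0 < rho l m := Real.exp_pos _

lemma rho_lt_one {l m : ℝ} (hl : l < 0) (hm : 0 < m) : rho l m < 1 :=
  Real.exp_lt_one_iff.mpr (div_neg_of_neg_of_pos (mul_neg_of_pos_of_neg Real.pi_pos hl) hm)

lemma Pplus_eq {l m : ℝ} (hl : l < 0) (hm : 0 < m) (η : E2) (α β : ℝ) :
    Pplus l m η α β = equil l m η α +
      ((β - α)/(1 - rho l m)) • (-(AinvMap l m η)) := by
  have hne : 1 - rho l m ≠ 0 := by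
    have := rho_lt_one hl hm; linarith
  rw [Pplus, equil, smul_neg, ← neg_smul, ← add_smul]
  congr 1
  field_simp
  ring

lemma Pminus_eq {l m : ℝ} (hl : l < 0) (hm : 0 < m) (η : E2) (α β : ℝ) :
    Pminus l m η α β = equil l m η β +
      ((β - α)/(1 - rho l m)) • (AinvMap l m η) := by
  have hne : 1 - rho l m ≠ 0 := by
    have := rho_lt_one hl hm; linarith
  rw [Pminus, equil, ← add_smul]
  congr 1
  field_simp
  ring

lemma regionC_eq {l m : ℝ} (hl : l < 0) (hm : 0 < m) (η : E2) {α β : ℝ} (hab : α < β) :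
    regionC l m η α β =
      (fun x => equil l m η α + ((β - α)/(1 - rho l m)) • x) '' CA l m (-(AinvMap l m η)) 0 ∪
      (fun x => equil l m η β + ((β - α)/(1 - rho l m)) • x) '' CA l m (AinvMap l m η) 0 := by
  have hc : 0 < (β - α)/(1 - rho l m) :=
    div_pos (by linarith) (by have := rho_lt_one hl hm; linarith)
  rw [regionC, Pplus_eq hl hm η α β, Pminus_eq hl hm η α β,
    CA_scale hc _ _, CA_scale hc _ _]

lemma equil_sub (l m : ℝ) (η : E2) (α α' : ℝ) :
    equil l m η α' - equil l m η α = (α - α') • AinvMap l m η := by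
  rw [equil, equil, ← sub_smul]
  congr 1
  ring

lemma move_est (l m : ℝ) (η : E2) (α α' c c' K : ℝ) (k : E2) (hk : ‖k‖ ≤ K) :
    dist (equil l m η α' + c' • k) (equil l m η α + c • k) ≤
      |α' - α| * ‖AinvMap l m η‖ + |c' - c| * K := by
  rw [dist_eq_norm]
  have hid : equil l m η α' + c' • k - (equil l m η α + c • k)
      = (α - α') • AinvMap l m η + (c' - c) • k := by
    rw [← equil_sub l m η α α', sub_smul]
    abel
  rw [hid]
  refine le_trans (norm_add_le _ _) ?_
  rw [norm_smul, norm_smul, Real.norm_eq_abs, Real.norm_eq_abs, abs_sub_comm α α']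
  exact add_le_add le_rfl (mul_le_mul_of_nonneg_left hk (abs_nonneg _))
end Stmt17

open Stmt17
set_option maxHeartbeats 1000000

/-- each `C_{α,β}` is a nonempty compact set and `(α, β) ↦ C_{α,β}` is continuous
with respect to the Hausdorff distance on `(-∞, ν) × (ν, +∞)`. -/
theorem stmt17 (l m : ℝ) (hl : l < 0) (hm : 0 < m) (η : E2) (hη : η ≠ 0) (ν : ℝ) :
    (∀ α β : ℝ, α < ν → ν < β →
      (regionC l m η α β).Nonempty ∧ IsCompact (regionC l m η α β)) ∧
    ∀ α β : ℝ, α < ν → ν < β → ∀ ε : ℝ, 0 < ε → ∃ δ : ℝ, 0 < δ ∧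
      ∀ α' β' : ℝ, α' < ν → ν < β' → |α' - α| < δ → |β' - β| < δ →
        Metric.hausdorffDist (regionC l m η α' β') (regionC l m η α β) < ε := by
  have hρ1 : rho l m < 1 := rho_lt_one hl hm
  have h1ρ : 0 < 1 - rho l m := by linarith
  have hAne : AinvMap l m η ≠ 0 := AinvMap_ne_zero hm hη
  have hN0 : 0 < ‖AinvMap l m η‖ := norm_pos_iff.mpr hAne
  obtain ⟨N, hN⟩ : ∃ N, N = ‖AinvMap l m η‖ := ⟨_, rfl⟩
  have hNpos : 0 < N := hN ▸ hN0
  constructor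
  · intro α β hα hβ
    have hab : α < β := hα.trans hβ
    constructor
    · exact ⟨equil l m η α, Or.inl (vertex_mem_CA l m hm.le _ _)⟩
    · rw [regionC_eq hl hm η hab]
      refine IsCompact.union ?_ ?_
      · exact (isCompact_CA0 hl hm (neg_ne_zero.mpr hAne)).image
          (continuous_const.add (continuous_const_smul _))
      · exact (isCompact_CA0 hl hm hAne).image
          (continuous_const.add (continuous_const_smul _))
  · intro α β hα hβ ε hε
    obtain ⟨D, hD⟩ : ∃ D, D = N + (2 * Real.sqrt 2 * N) / (1 - rho l m) := ⟨_, rfl⟩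
    have hD0 : 0 < D := by rw [hD]; positivity
    refine ⟨ε / (2 * (D + 1)), by positivity, ?_⟩
    intro α' β' hα' hβ' hda hdb
    obtain ⟨δ, hδ⟩ : ∃ δ, δ = ε / (2 * (D + 1)) := ⟨_, rfl⟩
    rw [← hδ] at hda hdb
    have hδ0 : 0 < δ := by rw [hδ]; positivity
    -- key symmetric estimate
    have key : ∀ a b a2 b2 : ℝ, a < ν → ν < b → a2 < ν → ν < b2 →
        |a - a2| ≤ δ → |b - b2| ≤ δ →
        ∀ x ∈ regionC l m η a b, ∃ y ∈ regionC l m η a2 b2, dist x y ≤ δ * D := by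
      intro a b a2 b2 ha hb ha2 hb2 hda' hdb' x hx
      have hab : a < b := ha.trans hb
      have hab2 : a2 < b2 := ha2.trans hb2
      have hcc : |(b - a)/(1 - rho l m) - (b2 - a2)/(1 - rho l m)| ≤
          2 * δ / (1 - rho l m) := by
        rw [div_sub_div_same, abs_div, abs_of_pos h1ρ]
        have habs : |b - a - (b2 - a2)| ≤ 2 * δ := by
          have h1 : b - a - (b2 - a2) = (b - b2) + (a2 - a) := by ring
          rw [h1]
          calc |(b - b2) + (a2 - a)| ≤ |b - b2| + |a2 - a| := abs_add_le _ _
            _ ≤ δ + δ := add_le_add hdb' (by rwa [abs_sub_comm])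
            _ = 2 * δ := by ring
        gcongr
      have hest : ∀ c c2 : ℝ, |c - c2| ≤ 2 * δ / (1 - rho l m) →
          ∀ (a a2 : ℝ), |a - a2| ≤ δ → ∀ k : E2, ‖k‖ ≤ Real.sqrt 2 * N →
          dist (equil l m η a + c • k) (equil l m η a2 + c2 • k) ≤ δ * D := by
        intro c c2 hc a3 a4 ha34 k hkb
        refine le_trans (move_est l m η a4 a3 c2 c (Real.sqrt 2 * N) k hkb) ?_
        have h1 : |a3 - a4| * ‖AinvMap l m η‖ ≤ δ * N := by
          rw [← hN]
          exact mul_le_mul ha34 le_rfl hNpos.le hδ0.le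
        have h2 : |c - c2| * (Real.sqrt 2 * N) ≤
            (2 * δ / (1 - rho l m)) * (Real.sqrt 2 * N) :=
          mul_le_mul_of_nonneg_right hc (by positivity)
        have h3 : δ * N + (2 * δ / (1 - rho l m)) * (Real.sqrt 2 * N) = δ * D := by
          rw [hD]; field_simp
        linarith
      rw [regionC_eq hl hm η hab] at hx
      rw [regionC_eq hl hm η hab2]
      rcases hx with ⟨k, hk, rfl⟩ | ⟨k, hk, rfl⟩
      · refine ⟨equil l m η a2 + ((b2 - a2)/(1 - rho l m)) • k,
          Or.inl ⟨k, hk, rfl⟩, ?_⟩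
        have hkb : ‖k‖ ≤ Real.sqrt 2 * N := by
          have := CA_subset_ball hl hm (neg_ne_zero.mpr hAne) hk
          rw [Metric.mem_closedBall, dist_zero_right, norm_neg, ← hN] at this
          exact this
        exact hest _ _ hcc a a2 hda' k hkb
      · refine ⟨equil l m η b2 + ((b2 - a2)/(1 - rho l m)) • k,
          Or.inr ⟨k, hk, rfl⟩, ?_⟩
        have hkb : ‖k‖ ≤ Real.sqrt 2 * N := by
          have := CA_subset_ball hl hm hAne hk
          rw [Metric.mem_closedBall, dist_zero_right, ← hN] at this
          exact this
        exact hest _ _ hcc b b2 hdb' k hkb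
    have h1 := key α' β' α β hα' hβ' hα hβ hda.le hdb.le
    have h2 := key α β α' β' hα hβ hα' hβ'
      (by rw [abs_sub_comm]; exact hda.le) (by rw [abs_sub_comm]; exact hdb.le)
    have hhd := Metric.hausdorffDist_le_of_mem_dist (by positivity) h1 h2
    refine lt_of_le_of_lt hhd ?_
    have : δ * D < δ * (2 * (D + 1)) :=
      mul_lt_mul_of_pos_left (by linarith) hδ0
    have heq : δ * (2 * (D + 1)) = ε := by
      rw [hδ]; field_simp
    linarith
end
end
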